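/- arXiv:1003.1958 — 3 statements merged into one kernel-verified Lean document; each statement's English description precedes it below -/
import Mathlib

section
/- There exist an absolute constant θ₀ ∈ (0,1) and an absolute constant C such that the following holds. Let G be a bipartite graph with parts A and B of size N, let 0 < θ ≤ θ₀ and d ∈ (0,1], and suppose that every vertex of G has degree at least (1−θ)dN, that every two distinct vertices lying in the same part of G have at most (1+θ)d²N common neighbours, and that θ^{4/3} d² N ≥ C. Then G contains at least (1 − θ^{1/3})·d·N pairwise edge-disjoint perfect matchings. -/
open Finset

/-- `M` is a perfect matching of the bipartite graph with parts two copies of `Fin N`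
and edge set `E`. -/
def IsPMatching (N : ℕ) (E M : Finset (Fin N × Fin N)) : Prop :=
  M ⊆ E ∧ ∃ σ : Equiv.Perm (Fin N), M = Finset.univ.image fun a => (a, σ a)

namespace Stmt8

variable {N : ℕ}

def deg1 (F : Finset (Fin N × Fin N)) (a : Fin N) : ℕ := (F.filter fun p => p.1 = a).card
def deg2 (F : Finset (Fin N × Fin N)) (b : Fin N) : ℕ := (F.filter fun p => p.2 = b).card
def cut (E : Finset (Fin N × Fin N)) (S T : Finset (Fin N)) : ℕ :=
  (E.filter fun p => p.1 ∈ S ∧ p.2 ∈ T).card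

inductive RB (E F : Finset (Fin N × Fin N)) (a0 : Fin N) : Fin N → ℕ → Prop where
  | base (b : Fin N) : (a0, b) ∈ E → (a0, b) ∉ F → RB E F a0 b 0
  | step (b b' a : Fin N) (n : ℕ) : RB E F a0 b' n → (a, b') ∈ F → (a, b) ∈ E →
      (a, b) ∉ F → RB E F a0 b (n + 1)

lemma deg1_insert_of_ne (F : Finset (Fin N × Fin N)) {e : Fin N × Fin N} {a : Fin N}
    (h : ¬ e.1 = a) : deg1 (insert e F) a = deg1 F a := by
  unfold deg1; rw [filter_insert, if_neg h]

lemma deg1_insert_self (F : Finset (Fin N × Fin N)) {e : Fin N × Fin N} (he : e ∉ F) :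
    deg1 (insert e F) e.1 = deg1 F e.1 + 1 := by
  unfold deg1
  rw [filter_insert, if_pos rfl, card_insert_of_notMem (fun h => he (mem_filter.mp h).1)]

lemma deg2_insert_of_ne (F : Finset (Fin N × Fin N)) {e : Fin N × Fin N} {b : Fin N}
    (h : ¬ e.2 = b) : deg2 (insert e F) b = deg2 F b := by
  unfold deg2; rw [filter_insert, if_neg h]

lemma deg2_insert_self (F : Finset (Fin N × Fin N)) {e : Fin N × Fin N} (he : e ∉ F) :
    deg2 (insert e F) e.2 = deg2 F e.2 + 1 := by
  unfold deg2
  rw [filter_insert, if_pos rfl, card_insert_of_notMem (fun h => he (mem_filter.mp h).1)]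

lemma deg1_F1 {F : Finset (Fin N × Fin N)} {a b₁ b₂ : Fin N}
    (h1 : (a, b₁) ∉ F) (h2 : (a, b₂) ∈ F) (a' : Fin N) :
    deg1 (insert (a, b₁) (F.erase (a, b₂))) a' = deg1 F a' := by
  unfold deg1
  rw [filter_insert]
  by_cases ha : a = a'
  · subst ha
    rw [if_pos rfl, filter_erase]
    rw [card_insert_of_notMem (fun h => h1 (mem_filter.mp (mem_of_mem_erase h)).1)]
    exact card_erase_add_one (mem_filter.mpr ⟨h2, rfl⟩)
  · rw [if_neg (show ¬((a, b₁).1 = a') from ha), filter_erase, erase_eq_of_notMem]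
    intro h
    exact ha (mem_filter.mp h).2

lemma deg2_F1_b1 {F : Finset (Fin N × Fin N)} {a b₁ b₂ : Fin N}
    (h1 : (a, b₁) ∉ F) (hne : b₁ ≠ b₂) :
    deg2 (insert (a, b₁) (F.erase (a, b₂))) b₁ = deg2 F b₁ + 1 := by
  unfold deg2
  rw [filter_insert, if_pos rfl, filter_erase]
  have hnm : (a, b₂) ∉ F.filter (fun p => p.2 = b₁) := fun h => hne.symm (mem_filter.mp h).2
  rw [erase_eq_of_notMem hnm, card_insert_of_notMem (fun h => h1 (mem_filter.mp h).1)]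

lemma deg2_F1_b2 {F : Finset (Fin N × Fin N)} {a b₁ b₂ : Fin N}
    (h2 : (a, b₂) ∈ F) (hne : b₁ ≠ b₂) :
    deg2 (insert (a, b₁) (F.erase (a, b₂))) b₂ + 1 = deg2 F b₂ := by
  unfold deg2
  rw [filter_insert, if_neg (show ¬((a, b₁).2 = b₂) from hne), filter_erase]
  exact card_erase_add_one (mem_filter.mpr ⟨h2, rfl⟩)

lemma deg2_F1_other {F : Finset (Fin N × Fin N)} {a b₁ b₂ b : Fin N}
    (hb1 : b ≠ b₁) (hb2 : b ≠ b₂) :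
    deg2 (insert (a, b₁) (F.erase (a, b₂))) b = deg2 F b := by
  unfold deg2
  rw [filter_insert, if_neg (show ¬((a, b₁).2 = b) from fun h => hb1 h.symm), filter_erase,
    erase_eq_of_notMem (fun h => hb2 ((mem_filter.mp h).2).symm)]

lemma rb_trans {E F : Finset (Fin N × Fin N)} {a0 a b₁ b₂ : Fin N}
    (h1F : (a, b₁) ∉ F) (h2F : (a, b₂) ∈ F) :
    ∀ n b, RB E F a0 b n →
      (∀ j, j ≤ n → ¬ RB E F a0 b₁ j) →
      (∀ j, j < n → ¬ RB E F a0 b₂ j) →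
      RB E (insert (a, b₁) (F.erase (a, b₂))) a0 b n := by
  intro n b h
  induction h with
  | base b hbE hbF =>
    intro hn1 _
    have hbne : b ≠ b₁ := fun h => hn1 0 le_rfl (h ▸ RB.base b hbE hbF)
    refine RB.base b hbE ?_
    intro hmem
    rcases Finset.mem_insert.mp hmem with h | h
    · exact hbne (congrArg Prod.snd h)
    · exact hbF (Finset.mem_of_mem_erase h)
  | step b b' a' n hb' ha'F ha'E ha'nF ih =>
    intro hn1 hn2
    have hfull : RB E F a0 b (n + 1) := RB.step b b' a' n hb' ha'F ha'E ha'nF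
    have hbne : b ≠ b₁ := fun h => hn1 (n + 1) le_rfl (h ▸ hfull)
    have hb'ne2 : (a', b') ≠ (a, b₂) := by
      intro h
      have hb2 : b' = b₂ := congrArg Prod.snd h
      exact hn2 n (Nat.lt_succ_self n) (hb2 ▸ hb')
    have ihh := ih (fun j hj => hn1 j (le_trans hj (Nat.le_succ n)))
      (fun j hj => hn2 j (lt_trans hj (Nat.lt_succ_self n)))
    refine RB.step b b' a' n ihh ?_ ha'E ?_
    · exact Finset.mem_insert_of_mem (Finset.mem_erase.mpr ⟨hb'ne2, ha'F⟩)
    · intro hmem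
      rcases Finset.mem_insert.mp hmem with h | h
      · exact hbne (congrArg Prod.snd h)
      · exact ha'nF (Finset.mem_of_mem_erase h)

lemma aug {E : Finset (Fin N × Fin N)} (k : ℕ) {a0 : Fin N} :
    ∀ n (F : Finset (Fin N × Fin N)), F ⊆ E →
      (∀ a, deg1 F a ≤ k) → (∀ b, deg2 F b ≤ k) → deg1 F a0 < k →
      ∀ b, RB E F a0 b n → deg2 F b < k →
      ∃ F', F' ⊆ E ∧ (∀ a, deg1 F' a ≤ k) ∧ (∀ b, deg2 F' b ≤ k) ∧
        F'.card = F.card + 1 := by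
  intro n
  induction n using Nat.strong_induction_on with
  | _ n ih =>
  intro F hFE hd1 hd2 ha0 b hRB hdefb
  classical
  have hex : ∃ m, ∃ b, RB E F a0 b m ∧ deg2 F b < k := ⟨n, b, hRB, hdefb⟩
  obtain ⟨b₁, hb₁, hb₁def⟩ := Nat.find_spec hex
  have hmin : ∀ j b', RB E F a0 b' j → deg2 F b' < k → Nat.find hex ≤ j :=
    fun j b' hh1 hh2 => Nat.find_le ⟨b', hh1, hh2⟩
  have hn0le : Nat.find hex ≤ n := hmin n b hRB hdefb
  obtain ⟨n0, hn0⟩ : ∃ n0, Nat.find hex = n0 := ⟨_, rfl⟩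
  rw [hn0] at hb₁ hmin hn0le
  cases hb₁ with
  | base _ hbE hbF =>
    refine ⟨insert (a0, b₁) F, ?_, ?_, ?_, card_insert_of_notMem hbF⟩
    · exact Finset.insert_subset hbE hFE
    · intro a
      by_cases ha : a = a0
      · have h : deg1 (insert (a0, b₁) F) a0 = deg1 F a0 + 1 := deg1_insert_self F hbF
        rw [ha, h]
        omega
      · rw [deg1_insert_of_ne F (show ¬((a0, b₁).1 = a) from fun h => ha h.symm)]
        exact hd1 a
    · intro b'
      by_cases hb : b' = b₁
      · have h : deg2 (insert (a0, b₁) F) b₁ = deg2 F b₁ + 1 := deg2_insert_self F hbF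
        rw [hb, h]
        omega
      · rw [deg2_insert_of_ne F (show ¬((a0, b₁).2 = b') from fun h => hb h.symm)]
        exact hd2 b'
  | step _ b₂ a m hb₂ haF haE hanF =>
    have hk1 : 1 ≤ k := Nat.pos_of_ne_zero (fun h => by omega)
    have hb1b2 : b₁ ≠ b₂ := fun h => hanF (h ▸ haF)
    have hex2 : ∃ j, RB E F a0 b₂ j := ⟨m, hb₂⟩
    have hm₂ : RB E F a0 b₂ (Nat.find hex2) := Nat.find_spec hex2
    have hm₂le : Nat.find hex2 ≤ m := Nat.find_le hb₂
    set F₁ := insert (a, b₁) (F.erase (a, b₂)) with hF₁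
    have htrans : RB E F₁ a0 b₂ (Nat.find hex2) := by
      refine rb_trans hanF haF _ _ hm₂ ?_ ?_
      · intro j hj hRBj
        have := hmin j b₁ hRBj hb₁def
        omega
      · intro j hj hRBj
        exact absurd (Nat.find_le hRBj) (by omega)
    have hd2b₂ : deg2 F₁ b₂ + 1 = deg2 F b₂ := deg2_F1_b2 haF hb1b2
    have hcard : F₁.card = F.card := by
      rw [hF₁, card_insert_of_notMem (fun h => hanF (mem_of_mem_erase h)),
        card_erase_add_one haF]
    have hres := ih (Nat.find hex2) (by omega) F₁
      (Finset.insert_subset haE (fun p hp => hFE (mem_of_mem_erase hp)))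
      (fun a' => by rw [deg1_F1 hanF haF a']; exact hd1 a')
      (fun b' => by
        by_cases hb' : b' = b₁
        · rw [hb', deg2_F1_b1 hanF hb1b2]
          omega
        · by_cases hb'2 : b' = b₂
          · have h2k := hd2 b₂
            rw [hb'2]
            omega
          · rw [deg2_F1_other hb' hb'2]; exact hd2 b')
      (by rw [deg1_F1 hanF haF a0]; exact ha0)
      b₂ htrans (by have h2k := hd2 b₂; omega)
    obtain ⟨F', hF'E, hF'd1, hF'd2, hF'card⟩ := hres
    exact ⟨F', hF'E, hF'd1, hF'd2, by omega⟩

lemma sum_deg1 (G : Finset (Fin N × Fin N)) : ∑ a, deg1 G a = G.card :=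
  (card_eq_sum_card_fiberwise (fun x _ => mem_univ x.1)).symm

lemma sum_deg2 (G : Finset (Fin N × Fin N)) : ∑ b, deg2 G b = G.card :=
  (card_eq_sum_card_fiberwise (fun x _ => mem_univ x.2)).symm

open scoped Classical in
theorem exists_regular (E : Finset (Fin N × Fin N)) (k : ℕ)
    (hcut : ∀ S T : Finset (Fin N), k * (S.card + T.card) ≤ k * N + cut E S T) :
    ∃ F, F ⊆ E ∧ (∀ a, deg1 F a = k) ∧ (∀ b, deg2 F b = k) := by
  classical
  set H := E.powerset.filter (fun F => (∀ a, deg1 F a ≤ k) ∧ (∀ b, deg2 F b ≤ k)) with hH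
  have hne : H.Nonempty := ⟨∅, by rw [hH, mem_filter, mem_powerset]; exact ⟨empty_subset _, fun a => by simp [deg1], fun b => by simp [deg2]⟩⟩
  obtain ⟨F, hFH, hmax⟩ := H.exists_max_image Finset.card hne
  rw [hH, mem_filter, mem_powerset] at hFH
  obtain ⟨hFE, hd1, hd2⟩ := hFH
  have hsumk : ∑ _a : Fin N, k = k * N := by
    rw [Finset.sum_const, card_univ, Fintype.card_fin, smul_eq_mul, mul_comm]
  have hcard_le : F.card ≤ k * N := by
    rw [← sum_deg1, ← hsumk]
    exact Finset.sum_le_sum (fun a _ => hd1 a)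
  have hcard : F.card = k * N := by
    by_contra hne'
    have hlt : F.card < k * N := lt_of_le_of_ne hcard_le hne'
    obtain ⟨a0, _, ha0⟩ : ∃ a0 ∈ univ, deg1 F a0 < k := by
      apply Finset.exists_lt_of_sum_lt
      rw [sum_deg1, hsumk]
      exact hlt
    by_cases hreach : ∃ b m, RB E F a0 b m ∧ deg2 F b < k
    · obtain ⟨b, m, hRB, hdef⟩ := hreach
      obtain ⟨F', hF'E, hF'd1, hF'd2, hF'card⟩ := aug k m F hFE hd1 hd2 ha0 b hRB hdef
      have hF'H : F' ∈ H := by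
        rw [hH, mem_filter, mem_powerset]
        exact ⟨hF'E, hF'd1, hF'd2⟩
      have := hmax F' hF'H
      omega
    · push_neg at hreach
      set RBs := univ.filter (fun b => ∃ m, RB E F a0 b m) with hRBs
      set RAs := insert a0 (univ.filter (fun a => ∃ b m, RB E F a0 b m ∧ (a, b) ∈ F))
        with hRAs
      have hfull : ∀ b ∈ RBs, deg2 F b = k := by
        intro b hb
        rcases (mem_filter.mp (hRBs ▸ hb)).2 with ⟨m, hm⟩
        exact le_antisymm (hd2 b) (hreach b m hm)
      have hstep : ∀ a b, a ∈ RAs → (a, b) ∈ E → (a, b) ∉ F → b ∈ RBs := by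
        intro a b ha hE hF
        rcases mem_insert.mp (hRAs ▸ ha) with rfl | ha'
        · exact mem_filter.mpr ⟨mem_univ _, 0, RB.base b hE hF⟩
        · rcases (mem_filter.mp ha').2 with ⟨b', m, hb', habF⟩
          exact mem_filter.mpr ⟨mem_univ _, m + 1, RB.step b b' a m hb' habF hE hF⟩
      have hback : ∀ a b, (a, b) ∈ F → b ∈ RBs → a ∈ RAs := by
        intro a b hF hb
        rcases (mem_filter.mp (hRBs ▸ hb)).2 with ⟨m, hm⟩
        exact mem_insert_of_mem (mem_filter.mpr ⟨mem_univ _, b, m, hm, hF⟩)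
      -- the E-cut equals the F-cut
      have hEF : (E.filter fun p => p.1 ∈ RAs ∧ p.2 ∈ RBsᶜ)
          = (F.filter fun p => p.1 ∈ RAs ∧ p.2 ∈ RBsᶜ) := by
        ext p
        simp only [mem_filter]
        constructor
        · rintro ⟨hpE, hp1, hp2⟩
          refine ⟨?_, hp1, hp2⟩
          by_contra hpF
          have : p.2 ∈ RBs := hstep p.1 p.2 hp1 (by rwa [Prod.mk.eta]) (by rwa [Prod.mk.eta])
          simp only [Finset.mem_compl] at hp2
          exact hp2 this
        · rintro ⟨hpF, hp1, hp2⟩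
          exact ⟨hFE hpF, hp1, hp2⟩
      -- splitting F-edges out of RAs
      have e1 : (F.filter fun p => p.1 ∈ RAs ∧ p.2 ∈ RBs)
          = ((F.filter fun p => p.1 ∈ RAs).filter fun p => p.2 ∈ RBs) := by
        ext p; simp only [mem_filter]; tauto
      have e2 : (F.filter fun p => p.1 ∈ RAs ∧ p.2 ∈ RBsᶜ)
          = ((F.filter fun p => p.1 ∈ RAs).filter fun p => ¬ (p.2 ∈ RBs)) := by
        ext p; simp only [mem_filter, Finset.mem_compl]; tauto
      have hsplit : (F.filter fun p => p.1 ∈ RAs ∧ p.2 ∈ RBs).card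
          + (F.filter fun p => p.1 ∈ RAs ∧ p.2 ∈ RBsᶜ).card
          = (F.filter fun p => p.1 ∈ RAs).card := by
        rw [e1, e2, Finset.card_filter_add_card_filter_not]
      -- all F-edges into RBs start in RAs
      have h6 : (F.filter fun p => p.1 ∈ RAs ∧ p.2 ∈ RBs) = F.filter fun p => p.2 ∈ RBs := by
        ext p
        simp only [mem_filter]
        constructor
        · rintro ⟨hpF, _, hp2⟩; exact ⟨hpF, hp2⟩
        · rintro ⟨hpF, hp2⟩
          exact ⟨hpF, hback p.1 p.2 (by rwa [Prod.mk.eta]) hp2, hp2⟩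
      have h6card : (F.filter fun p => p.2 ∈ RBs).card = k * RBs.card := by
        rw [card_eq_sum_card_fiberwise (f := Prod.snd) (s := F.filter fun p => p.2 ∈ RBs) (t := RBs)
          (fun x hx => (mem_filter.mp hx).2)]
        have : ∀ b ∈ RBs, ((F.filter fun p => p.2 ∈ RBs).filter fun p => p.2 = b).card
            = deg2 F b := by
          intro b hb
          rw [filter_filter]
          unfold deg2
          congr 1
          apply Finset.filter_congr
          intro p _
          constructor
          · rintro ⟨_, h⟩; exact h
          · rintro h; exact ⟨h ▸ hb, h⟩
        rw [Finset.sum_congr rfl this, Finset.sum_congr rfl hfull, Finset.sum_const,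
          smul_eq_mul, mul_comm]
      have h7 : (F.filter fun p => p.1 ∈ RAs).card < k * RAs.card := by
        rw [card_eq_sum_card_fiberwise (f := Prod.fst) (s := F.filter fun p => p.1 ∈ RAs) (t := RAs)
          (fun x hx => (mem_filter.mp hx).2)]
        have heq : ∀ a ∈ RAs, ((F.filter fun p => p.1 ∈ RAs).filter fun p => p.1 = a).card
            = deg1 F a := by
          intro a ha
          rw [filter_filter]
          unfold deg1
          congr 1
          apply Finset.filter_congr
          intro p _
          constructor
          · rintro ⟨_, h⟩; exact h
          · rintro h; exact ⟨h ▸ ha, h⟩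
        rw [Finset.sum_congr rfl heq]
        calc ∑ a ∈ RAs, deg1 F a < ∑ _a ∈ RAs, k := by
              apply Finset.sum_lt_sum (fun a _ => hd1 a)
              exact ⟨a0, mem_insert_self _ _, ha0⟩
          _ = k * RAs.card := by rw [Finset.sum_const, smul_eq_mul, mul_comm]
      have h8 := hcut RAs RBsᶜ
      have hcompl : RBsᶜ.card = N - RBs.card := by
        rw [Finset.card_compl, Fintype.card_fin]
      have hRBle : RBs.card ≤ N := by
        have := Finset.card_le_card (Finset.subset_univ RBs)
        rwa [card_univ, Fintype.card_fin] at this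
      have hkn : k * (N - RBs.card) + k * RBs.card = k * N := by
        rw [← Nat.mul_add, Nat.sub_add_cancel hRBle]
      rw [hcompl] at h8
      unfold cut at h8
      rw [hEF] at h8
      have hX := hsplit
      rw [h6, h6card] at hX
      have h9 : k * RBs.card + (F.filter fun p => p.1 ∈ RAs ∧ p.2 ∈ RBsᶜ).card
          < k * RAs.card := by omega
      rw [Nat.mul_add] at h8
      omega
  refine ⟨F, hFE, ?_, ?_⟩
  · intro a
    have := (Finset.sum_eq_sum_iff_of_le (fun a (_ : a ∈ univ) => hd1 a)).1
      (by rw [sum_deg1, hsumk, hcard])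
    exact this a (mem_univ a)
  · intro b
    have := (Finset.sum_eq_sum_iff_of_le (fun b (_ : b ∈ univ) => hd2 b)).1
      (by rw [sum_deg2, hsumk, hcard])
    exact this b (mem_univ b)

theorem decomp (hN : 0 < N) :
    ∀ (k : ℕ) (F : Finset (Fin N × Fin N)),
      (∀ a, deg1 F a = k) → (∀ b, deg2 F b = k) →
      ∃ 𝒮 : Finset (Finset (Fin N × Fin N)),
        𝒮.card = k ∧
        (∀ M ∈ 𝒮, M ⊆ F ∧ ∃ σ : Equiv.Perm (Fin N), M = univ.image fun a => (a, σ a)) ∧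
        (𝒮 : Set (Finset (Fin N × Fin N))).Pairwise Disjoint := by
  intro k
  induction k with
  | zero =>
    intro F _ _
    exact ⟨∅, by simp, by simp, by simp⟩
  | succ k ih =>
    intro F hd1 hd2
    classical
    -- Hall's condition
    set nbhd : Fin N → Finset (Fin N) := fun a => (F.filter fun p => p.1 = a).image Prod.snd
      with hnbhd
    have hhall : ∀ s : Finset (Fin N), s.card ≤ (s.biUnion nbhd).card := by
      intro s
      have hcount : (k + 1) * s.card = (F.filter fun p => p.1 ∈ s).card := by
        rw [card_eq_sum_card_fiberwise (f := Prod.fst) (s := F.filter fun p => p.1 ∈ s) (t := s)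
          (fun x hx => (mem_filter.mp hx).2)]
        have heq : ∀ a ∈ s, ((F.filter fun p => p.1 ∈ s).filter fun p => p.1 = a).card
            = deg1 F a := by
          intro a ha
          rw [filter_filter]
          unfold deg1
          congr 1
          apply Finset.filter_congr
          intro p _
          constructor
          · rintro ⟨_, h⟩; exact h
          · rintro h; exact ⟨h ▸ ha, h⟩
        rw [Finset.sum_congr rfl heq, Finset.sum_congr rfl (fun a _ => hd1 a),
          Finset.sum_const, smul_eq_mul, mul_comm]
      have hsubset : (F.filter fun p => p.1 ∈ s)
          ⊆ (F.filter fun p => p.2 ∈ s.biUnion nbhd) := by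
        intro p hp
        obtain ⟨hpF, hp1⟩ := mem_filter.mp hp
        refine mem_filter.mpr ⟨hpF, Finset.mem_biUnion.mpr ⟨p.1, hp1, ?_⟩⟩
        rw [hnbhd]
        exact Finset.mem_image.mpr ⟨p, mem_filter.mpr ⟨hpF, rfl⟩, rfl⟩
      have hcount2 : (F.filter fun p => p.2 ∈ s.biUnion nbhd).card
          = (k + 1) * (s.biUnion nbhd).card := by
        rw [card_eq_sum_card_fiberwise (f := Prod.snd) (s := F.filter fun p => p.2 ∈ s.biUnion nbhd) (t := s.biUnion nbhd)
          (fun x hx => (mem_filter.mp hx).2)]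
        have heq : ∀ b ∈ s.biUnion nbhd,
            ((F.filter fun p => p.2 ∈ s.biUnion nbhd).filter fun p => p.2 = b).card
            = deg2 F b := by
          intro b hb
          rw [filter_filter]
          unfold deg2
          congr 1
          apply Finset.filter_congr
          intro p _
          constructor
          · rintro ⟨_, h⟩; exact h
          · rintro h; exact ⟨h ▸ hb, h⟩
        rw [Finset.sum_congr rfl heq, Finset.sum_congr rfl (fun b _ => hd2 b),
          Finset.sum_const, smul_eq_mul, mul_comm]
      have : (k + 1) * s.card ≤ (k + 1) * (s.biUnion nbhd).card := by
        rw [hcount, ← hcount2]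
        exact Finset.card_le_card hsubset
      exact Nat.le_of_mul_le_mul_left this (Nat.succ_pos k)
    obtain ⟨f, hfinj, hf⟩ := (Finset.all_card_le_biUnion_card_iff_exists_injective nbhd).1 hhall
    have hfbij : Function.Bijective f := (Finite.injective_iff_bijective).1 hfinj
    set σ : Equiv.Perm (Fin N) := Equiv.ofBijective f hfbij with hσ
    set M : Finset (Fin N × Fin N) := univ.image fun a => (a, f a) with hM
    have hMF : M ⊆ F := by
      intro p hp
      obtain ⟨a, _, rfl⟩ := Finset.mem_image.mp hp
      have := hf a
      rw [hnbhd] at this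
      obtain ⟨q, hq, hq2⟩ := Finset.mem_image.mp this
      obtain ⟨hqF, hq1⟩ := mem_filter.mp hq
      have : q = (a, f a) := Prod.ext hq1 hq2
      rwa [this] at hqF
    have hMfib1 : ∀ a, (M.filter fun p => p.1 = a) = {(a, f a)} := by
      intro a
      ext p
      simp only [mem_filter, Finset.mem_singleton, hM, Finset.mem_image]
      constructor
      · rintro ⟨⟨a', _, rfl⟩, h1⟩
        simp only at h1
        rw [h1]
      · rintro rfl
        exact ⟨⟨a, mem_univ a, rfl⟩, rfl⟩
    have hMfib2 : ∀ b, (M.filter fun p => p.2 = b) = {(σ.symm b, b)} := by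
      intro b
      ext p
      simp only [mem_filter, Finset.mem_singleton, hM, Finset.mem_image]
      constructor
      · rintro ⟨⟨a', _, rfl⟩, h2⟩
        simp only at h2
        have : a' = σ.symm b := by
          apply hfinj
          rw [h2]
          exact (σ.apply_symm_apply b).symm
        exact Prod.ext this h2
      · rintro rfl
        refine ⟨⟨σ.symm b, mem_univ _, ?_⟩, rfl⟩
        congr 1
        exact σ.apply_symm_apply b
    have hd1' : ∀ a, deg1 (F \ M) a = k := by
      intro a
      unfold deg1
      have : (F \ M).filter (fun p => p.1 = a) = (F.filter fun p => p.1 = a).erase (a, f a) := by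
        ext p
        simp only [mem_filter, Finset.mem_sdiff, Finset.mem_erase]
        constructor
        · rintro ⟨⟨hpF, hpM⟩, h1⟩
          refine ⟨?_, hpF, h1⟩
          intro hpe
          apply hpM
          rw [hpe, hM]
          exact Finset.mem_image.mpr ⟨a, mem_univ a, rfl⟩
        · rintro ⟨hne, hpF, h1⟩
          refine ⟨⟨hpF, ?_⟩, h1⟩
          intro hpM
          apply hne
          have : p ∈ M.filter fun q => q.1 = a := mem_filter.mpr ⟨hpM, h1⟩
          rwa [hMfib1 a, Finset.mem_singleton] at this
      rw [this]
      have hmem : (a, f a) ∈ F.filter fun p => p.1 = a := by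
        refine mem_filter.mpr ⟨hMF ?_, rfl⟩
        rw [hM]
        exact Finset.mem_image.mpr ⟨a, mem_univ a, rfl⟩
      have h := Finset.card_erase_add_one hmem
      have hk := hd1 a
      unfold deg1 at hk
      omega
    have hd2' : ∀ b, deg2 (F \ M) b = k := by
      intro b
      unfold deg2
      have : (F \ M).filter (fun p => p.2 = b)
          = (F.filter fun p => p.2 = b).erase (σ.symm b, b) := by
        ext p
        simp only [mem_filter, Finset.mem_sdiff, Finset.mem_erase]
        constructor
        · rintro ⟨⟨hpF, hpM⟩, h2⟩
          refine ⟨?_, hpF, h2⟩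
          intro hpe
          apply hpM
          rw [hpe, hM]
          refine Finset.mem_image.mpr ⟨σ.symm b, mem_univ _, ?_⟩
          congr 1
          exact σ.apply_symm_apply b
        · rintro ⟨hne, hpF, h2⟩
          refine ⟨⟨hpF, ?_⟩, h2⟩
          intro hpM
          apply hne
          have : p ∈ M.filter fun q => q.2 = b := mem_filter.mpr ⟨hpM, h2⟩
          rwa [hMfib2 b, Finset.mem_singleton] at this
      rw [this]
      have hmem : (σ.symm b, b) ∈ F.filter fun p => p.2 = b := by
        refine mem_filter.mpr ⟨hMF ?_, rfl⟩
        rw [hM]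
        refine Finset.mem_image.mpr ⟨σ.symm b, mem_univ _, ?_⟩
        congr 1
        exact σ.apply_symm_apply b
      have h := Finset.card_erase_add_one hmem
      have hk := hd2 b
      unfold deg2 at hk
      omega
    obtain ⟨𝒮', h𝒮'card, h𝒮'mem, h𝒮'pair⟩ := ih (F \ M) hd1' hd2'
    have hMnot : M ∉ 𝒮' := by
      intro hmem
      have hsub := (h𝒮'mem M hmem).1
      have : ((⟨0, hN⟩ : Fin N), f ⟨0, hN⟩) ∈ M := by
        rw [hM]; exact Finset.mem_image.mpr ⟨_, mem_univ _, rfl⟩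
      have h2 := hsub this
      rw [Finset.mem_sdiff] at h2
      exact h2.2 this
    refine ⟨insert M 𝒮', ?_, ?_, ?_⟩
    · rw [Finset.card_insert_of_notMem hMnot, h𝒮'card]
    · intro M' hM'
      rcases Finset.mem_insert.mp hM' with rfl | hM'
      · refine ⟨hMF, σ, ?_⟩
        rw [hM]
        rfl
      · obtain ⟨hsub, hperm⟩ := h𝒮'mem M' hM'
        exact ⟨fun p hp => (Finset.mem_sdiff.mp (hsub hp)).1, hperm⟩
    · rw [Finset.coe_insert]
      apply Set.Pairwise.insert h𝒮'pair
      intro M' hM' hne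
      have hsub := (h𝒮'mem M' hM').1
      have hdisj : Disjoint M M' := by
        rw [Finset.disjoint_left]
        intro p hpM hpM'
        have := hsub hpM'
        rw [Finset.mem_sdiff] at this
        exact this.2 hpM
      exact ⟨hdisj, hdisj.symm⟩

-- counting lemmas for the analytic part

lemma fiber_snd (E : Finset (Fin N × Fin N)) (T : Finset (Fin N)) :
    (E.filter fun p => p.2 ∈ T).card = ∑ b ∈ T, (E.filter fun p => p.2 = b).card := by
  rw [card_eq_sum_card_fiberwise (f := Prod.snd) (s := E.filter fun p => p.2 ∈ T) (t := T) (fun x hx => (mem_filter.mp hx).2)]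
  apply Finset.sum_congr rfl
  intro b hb
  rw [filter_filter]
  congr 1
  apply Finset.filter_congr
  intro p _
  constructor
  · rintro ⟨_, h⟩; exact h
  · rintro h; exact ⟨h ▸ hb, h⟩

lemma fiber_fst_univ (E : Finset (Fin N × Fin N)) (T : Finset (Fin N)) :
    (E.filter fun p => p.2 ∈ T).card
      = ∑ a, (E.filter fun p => p.1 = a ∧ p.2 ∈ T).card := by
  rw [card_eq_sum_card_fiberwise (f := Prod.fst) (t := univ) (fun x _ => mem_univ x.1)]
  apply Finset.sum_congr rfl
  intro a _
  rw [filter_filter]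
  congr 1
  apply Finset.filter_congr
  intro p _
  tauto

lemma fiber_fst_S (E : Finset (Fin N × Fin N)) (S T : Finset (Fin N)) :
    cut E S T = ∑ a ∈ S, (E.filter fun p => p.1 = a ∧ p.2 ∈ T).card := by
  unfold cut
  rw [card_eq_sum_card_fiberwise (f := Prod.fst) (s := E.filter fun p => p.1 ∈ S ∧ p.2 ∈ T) (t := S)
    (fun x hx => ((mem_filter.mp hx).2).1)]
  apply Finset.sum_congr rfl
  intro a ha
  rw [filter_filter]
  congr 1
  apply Finset.filter_congr
  intro p _
  constructor
  · rintro ⟨⟨_, h2⟩, h1⟩; exact ⟨h1, h2⟩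
  · rintro ⟨h1, h2⟩; exact ⟨⟨h1 ▸ ha, h2⟩, h1⟩

lemma deg_le_N (E : Finset (Fin N × Fin N)) (b : Fin N) :
    (E.filter fun p => p.2 = b).card ≤ N := by
  have h := Finset.card_le_card_of_injOn (f := Prod.fst)
    (s := E.filter fun p => p.2 = b) (t := univ) (fun p _ => mem_univ p.1) ?_
  · rwa [card_univ, Fintype.card_fin] at h
  · intro p hp q hq hpq
    have hp2 := (mem_filter.mp hp).2
    have hq2 := (mem_filter.mp hq).2
    exact Prod.ext hpq (hp2.trans hq2.symm)

lemma degT_eq (E : Finset (Fin N × Fin N)) (T : Finset (Fin N)) (a : Fin N) :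
    (E.filter fun p => p.1 = a ∧ p.2 ∈ T).card = (T.filter fun b => (a, b) ∈ E).card := by
  apply Finset.card_bij (fun p _ => p.2)
  · intro p hp
    obtain ⟨hpE, h1, h2⟩ := mem_filter.mp hp
    refine mem_filter.mpr ⟨h2, ?_⟩
    have : (a, p.2) = p := Prod.ext h1.symm rfl
    rwa [this]
  · intro p hp q hq h
    have h1p := ((mem_filter.mp hp).2).1
    have h1q := ((mem_filter.mp hq).2).1
    exact Prod.ext (h1p.trans h1q.symm) h
  · intro b hb
    obtain ⟨hbT, hbE⟩ := mem_filter.mp hb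
    exact ⟨(a, b), mem_filter.mpr ⟨hbE, rfl, hbT⟩, rfl⟩

lemma diag_eq (E : Finset (Fin N × Fin N)) (b : Fin N) :
    (univ.filter fun a => (a, b) ∈ E ∧ (a, b) ∈ E).card = (E.filter fun p => p.2 = b).card := by
  apply Finset.card_bij (fun a _ => (a, b))
  · intro a ha
    exact mem_filter.mpr ⟨((mem_filter.mp ha).2).1, rfl⟩
  · intro a _ a' _ h
    exact congrArg Prod.fst h
  · intro p hp
    obtain ⟨hpE, h2⟩ := mem_filter.mp hp
    have hpe : (p.1, b) = p := Prod.ext rfl (show ((p.1, b) : Fin N × Fin N).2 = p.2 from h2.symm)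
    exact ⟨p.1, mem_filter.mpr ⟨mem_univ _, by rwa [hpe], by rwa [hpe]⟩, hpe⟩

lemma Q_bound (E : Finset (Fin N × Fin N)) (T : Finset (Fin N)) (cc : ℝ) (hcc : 0 ≤ cc)
    (hcod : ∀ b₁ b₂ : Fin N, b₁ ≠ b₂ →
      ((univ.filter fun a => (a, b₁) ∈ E ∧ (a, b₂) ∈ E).card : ℝ) ≤ cc) :
    ∑ a, ((E.filter fun p => p.1 = a ∧ p.2 ∈ T).card : ℝ) ^ 2
      ≤ (T.card : ℝ) ^ 2 * cc + ((E.filter fun p => p.2 ∈ T).card : ℝ) := by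
  classical
  set χ : Fin N → Fin N → ℝ := fun a b => if (a, b) ∈ E then (1 : ℝ) else 0 with hχ
  have hsum : ∀ a, ((E.filter fun p => p.1 = a ∧ p.2 ∈ T).card : ℝ) = ∑ b ∈ T, χ a b := by
    intro a
    rw [degT_eq, hχ]
    exact (Finset.sum_boole _ _).symm
  have hexp : ∑ a, ((E.filter fun p => p.1 = a ∧ p.2 ∈ T).card : ℝ) ^ 2
      = ∑ b ∈ T, ∑ b' ∈ T, ((univ.filter fun a => (a, b) ∈ E ∧ (a, b') ∈ E).card : ℝ) := by
    have h1 : ∀ a, ((E.filter fun p => p.1 = a ∧ p.2 ∈ T).card : ℝ) ^ 2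
        = ∑ b ∈ T, ∑ b' ∈ T, χ a b * χ a b' := by
      intro a
      rw [hsum a, sq, Finset.sum_mul_sum]
    rw [Finset.sum_congr rfl (fun a _ => h1 a), Finset.sum_comm]
    apply Finset.sum_congr rfl
    intro b _
    rw [Finset.sum_comm]
    apply Finset.sum_congr rfl
    intro b' _
    have h2 : ∀ a, χ a b * χ a b' = if (a, b) ∈ E ∧ (a, b') ∈ E then (1 : ℝ) else 0 := by
      intro a
      by_cases hab : (a, b) ∈ E <;> by_cases hab' : (a, b') ∈ E <;> simp [hχ, hab, hab']
    rw [Finset.sum_congr rfl (fun a _ => h2 a)]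
    exact Finset.sum_boole _ _
  rw [hexp]
  have hsplit : ∀ b ∈ T, ∑ b' ∈ T, ((univ.filter fun a => (a, b) ∈ E ∧ (a, b') ∈ E).card : ℝ)
      ≤ ((E.filter fun p => p.2 = b).card : ℝ) + (T.card - 1) * cc := by
    intro b hb
    rw [← Finset.add_sum_erase T _ hb, diag_eq]
    have h3 : ∑ b' ∈ T.erase b, ((univ.filter fun a => (a, b) ∈ E ∧ (a, b') ∈ E).card : ℝ)
        ≤ ∑ _b' ∈ T.erase b, cc := by
      apply Finset.sum_le_sum
      intro b' hb'
      exact hcod b b' (Ne.symm (Finset.ne_of_mem_erase hb'))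
    have h4 : ∑ _b' ∈ T.erase b, cc = ((T.card : ℝ) - 1) * cc := by
      rw [Finset.sum_const, Finset.card_erase_of_mem hb, nsmul_eq_mul]
      have : (1 : ℕ) ≤ T.card := Finset.card_pos.mpr ⟨b, hb⟩
      rw [Nat.cast_sub this]
      norm_num
    linarith [h3, h4.le]
  calc ∑ b ∈ T, ∑ b' ∈ T, ((univ.filter fun a => (a, b) ∈ E ∧ (a, b') ∈ E).card : ℝ)
      ≤ ∑ b ∈ T, (((E.filter fun p => p.2 = b).card : ℝ) + (T.card - 1) * cc) :=
        Finset.sum_le_sum hsplit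
    _ = (∑ b ∈ T, ((E.filter fun p => p.2 = b).card : ℝ)) + T.card * ((T.card - 1) * cc) := by
        rw [Finset.sum_add_distrib, Finset.sum_const, nsmul_eq_mul]
    _ ≤ (T.card : ℝ) ^ 2 * cc + ((E.filter fun p => p.2 ∈ T).card : ℝ) := by
        have h5 : (∑ b ∈ T, ((E.filter fun p => p.2 = b).card : ℝ))
            = ((E.filter fun p => p.2 ∈ T).card : ℝ) := by
          rw [fiber_snd]
          push_cast
          rfl
        have h6 : (T.card : ℝ) * ((T.card - 1) * cc) ≤ (T.card : ℝ) ^ 2 * cc := by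
          have ht0 : (0 : ℝ) ≤ T.card := Nat.cast_nonneg _
          nlinarith
        linarith [h5.le, h6]

set_option maxHeartbeats 2000000 in
open scoped Classical in
lemma key (hN : 0 < N) (E : Finset (Fin N × Fin N)) (θ d : ℝ) (k : ℕ)
    (hθ0 : 0 < θ) (hθ1 : θ ≤ 1e-8) (hd0 : 0 < d) (hd1 : d ≤ 1)
    (hdegB : ∀ b, (1 - θ) * d * N ≤ ((E.filter fun e => e.2 = b).card : ℝ))
    (hcod : ∀ b₁ b₂ : Fin N, b₁ ≠ b₂ →
      ((univ.filter fun a => (a, b₁) ∈ E ∧ (a, b₂) ∈ E).card : ℝ) ≤ (1 + θ) * d ^ 2 * N)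
    (hC : 100 ≤ θ ^ ((4 : ℝ) / 3) * d ^ 2 * N)
    (hk : (k : ℝ) ≤ (1 - θ ^ ((1 : ℝ) / 3)) * d * N + 1)
    (S T : Finset (Fin N)) (hST : T.card ≤ S.card) :
    k * (S.card + T.card) ≤ k * N + cut E S T := by
  by_cases htriv : S.card + T.card ≤ N
  · exact le_trans (Nat.mul_le_mul_left k htriv) (Nat.le_add_right _ _)
  push_neg at htriv
  -- powers of u
  set u := θ ^ ((1 : ℝ) / 6) with hu_def
  have hu0 : 0 < u := Real.rpow_pos_of_pos hθ0 _
  have hθ13 : θ ^ ((1 : ℝ) / 3) = u ^ 2 := by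
    rw [hu_def, ← Real.rpow_natCast (θ ^ ((1 : ℝ) / 6)) 2, ← Real.rpow_mul hθ0.le]
    norm_num
  have hθ43 : θ ^ ((4 : ℝ) / 3) = u ^ 8 := by
    rw [hu_def, ← Real.rpow_natCast (θ ^ ((1 : ℝ) / 6)) 8, ← Real.rpow_mul hθ0.le]
    norm_num
  have hθu : θ = u ^ 6 := by
    rw [hu_def, ← Real.rpow_natCast (θ ^ ((1 : ℝ) / 6)) 6, ← Real.rpow_mul hθ0.le]
    norm_num
  have hu21 : u ≤ 1 / 21 := by
    apply le_of_pow_le_pow_left₀ (n := 6) (by norm_num) (by norm_num)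
    rw [← hθu]
    calc θ ≤ 1e-8 := hθ1
      _ ≤ (1 / 21 : ℝ) ^ 6 := by norm_num
  have hu1 : u ≤ 1 := le_trans hu21 (by norm_num)
  -- cast basics
  have hsNn : S.card ≤ N := by simpa using Finset.card_le_univ S
  have htNn : T.card ≤ N := by simpa using Finset.card_le_univ T
  have ht1n : 1 ≤ T.card := by omega
  have hNR : (1 : ℝ) ≤ (N : ℝ) := by exact_mod_cast hN
  have hN0 : (0 : ℝ) < (N : ℝ) := by linarith
  have hsR : ((S.card : ℕ) : ℝ) ≤ (N : ℝ) := by exact_mod_cast hsNn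
  have htR : ((T.card : ℕ) : ℝ) ≤ (N : ℝ) := by exact_mod_cast htNn
  have hstR : (N : ℝ) + 1 ≤ (S.card : ℝ) + (T.card : ℝ) := by exact_mod_cast htriv
  have htsR : ((T.card : ℕ) : ℝ) ≤ (S.card : ℝ) := by exact_mod_cast hST
  have ht1R : (1 : ℝ) ≤ (T.card : ℝ) := by exact_mod_cast ht1n
  have hs2 : (N : ℝ) ≤ 2 * (S.card : ℝ) := by linarith
  have hs0 : (0 : ℝ) ≤ (S.card : ℝ) := Nat.cast_nonneg _
  have ht0 : (0 : ℝ) ≤ (T.card : ℝ) := Nat.cast_nonneg _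
  -- C-based facts
  have hCu : (100 : ℝ) ≤ u ^ 8 * d ^ 2 * N := by rw [← hθ43]; exact hC
  have h28 : u ^ 8 ≤ u ^ 2 := pow_le_pow_of_le_one hu0.le hu1 (by norm_num)
  have h48 : u ^ 8 ≤ u ^ 4 := pow_le_pow_of_le_one hu0.le hu1 (by norm_num)
  have hdd : d ^ 2 ≤ d := by nlinarith only [mul_nonneg hd0.le (sub_nonneg.mpr hd1)]
  have f1 : (100 : ℝ) ≤ u ^ 2 * d * N := by
    have e1 : u ^ 8 * d ^ 2 * N ≤ u ^ 2 * d ^ 2 * N := by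
      have := mul_le_mul_of_nonneg_right (mul_le_mul_of_nonneg_right h28 (by positivity : (0:ℝ) ≤ d ^ 2)) hN0.le
      linarith
    have e2 : u ^ 2 * d ^ 2 * N ≤ u ^ 2 * d * N := by
      have := mul_le_mul_of_nonneg_right (mul_le_mul_of_nonneg_left hdd (by positivity : (0:ℝ) ≤ u ^ 2)) hN0.le
      linarith
    linarith
  have f2 : (100 : ℝ) ≤ u ^ 4 * d ^ 2 * N := by
    have e1 : u ^ 8 * d ^ 2 * N ≤ u ^ 4 * d ^ 2 * N := by
      have := mul_le_mul_of_nonneg_right (mul_le_mul_of_nonneg_right h48 (by positivity : (0:ℝ) ≤ d ^ 2)) hN0.le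
      linarith
    linarith
  -- counting quantities
  set W : ℕ := (E.filter fun p => p.2 ∈ T).card with hW
  set degT : Fin N → ℕ := fun a => (E.filter fun p => p.1 = a ∧ p.2 ∈ T).card with hdegTd
  have c1R : ((W : ℕ) : ℝ) = ∑ a, (degT a : ℝ) := by
    rw [hW, fiber_fst_univ E T]
    push_cast
    rfl
  have hW0 : (0 : ℝ) ≤ (W : ℝ) := Nat.cast_nonneg _
  have cutSum : ((cut E S T : ℕ) : ℝ) = ∑ a ∈ S, (degT a : ℝ) := by
    rw [fiber_fst_S E S T]
    push_cast
    rfl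
  have hsplitsum : (∑ a ∈ S, (degT a : ℝ)) + (∑ a ∈ Sᶜ, (degT a : ℝ)) = (W : ℝ) := by
    rw [c1R]
    exact Finset.sum_add_sum_compl S _
  have r1 : (1 - θ) * d * N * T.card ≤ (W : ℝ) := by
    have hWsum : ((W : ℕ) : ℝ) = ∑ b ∈ T, ((E.filter fun p => p.2 = b).card : ℝ) := by
      rw [hW, fiber_snd E T]
      push_cast
      rfl
    have h := Finset.sum_le_sum (fun b (_ : b ∈ T) => hdegB b)
    rw [Finset.sum_const, nsmul_eq_mul] at h
    rw [hWsum]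
    calc (1 - θ) * d * N * T.card = T.card * ((1 - θ) * d * N) := by ring
      _ ≤ _ := h
  have r2 : (W : ℝ) ≤ T.card * N := by
    have hWsum : ((W : ℕ) : ℝ) = ∑ b ∈ T, ((E.filter fun p => p.2 = b).card : ℝ) := by
      rw [hW, fiber_snd E T]
      push_cast
      rfl
    have h := Finset.sum_le_sum
      (fun b (_ : b ∈ T) => (by exact_mod_cast deg_le_N E b : ((E.filter fun p => p.2 = b).card : ℝ) ≤ N))
    rw [Finset.sum_const, nsmul_eq_mul] at h
    rw [hWsum]
    exact h
  set Q : ℝ := ∑ a, (degT a : ℝ) ^ 2 with hQd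
  have r3 : Q ≤ (T.card : ℝ) ^ 2 * ((1 + θ) * d ^ 2 * N) + (W : ℝ) :=
    Q_bound E T ((1 + θ) * d ^ 2 * N) (by positivity) hcod
  -- Cauchy-Schwarz, multiplied through by N
  set G' : ℝ := ∑ a ∈ Sᶜ, ((N : ℝ) * degT a - W) with hG'd
  have hcompl : ((Sᶜ.card : ℕ) : ℝ) = (N : ℝ) - S.card := by
    rw [Finset.card_compl, Fintype.card_fin, Nat.cast_sub hsNn]
  have hG'sum : G' = (N : ℝ) * (∑ a ∈ Sᶜ, (degT a : ℝ)) - ((N : ℝ) - S.card) * W := by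
    rw [hG'd, Finset.sum_sub_distrib, Finset.sum_const, ← Finset.mul_sum, nsmul_eq_mul, hcompl]
  have hC1 : G' ^ 2 ≤ ((Sᶜ.card : ℕ) : ℝ) * ∑ a ∈ Sᶜ, ((N : ℝ) * degT a - W) ^ 2 := by
    have h := Finset.sum_mul_sq_le_sq_mul_sq Sᶜ (fun _ => (1 : ℝ))
      (fun a => (N : ℝ) * degT a - W)
    have e1 : (∑ a ∈ Sᶜ, (1 : ℝ) * ((N : ℝ) * degT a - W)) = G' := by
      rw [hG'd]
      apply Finset.sum_congr rfl
      intro a _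
      ring
    have e2 : (∑ _a ∈ Sᶜ, (1 : ℝ) ^ 2) = ((Sᶜ.card : ℕ) : ℝ) := by
      rw [Finset.sum_const, nsmul_eq_mul]
      ring
    rw [e1, e2] at h
    exact h
  have hC2 : ∑ a ∈ Sᶜ, ((N : ℝ) * degT a - W) ^ 2 ≤ ∑ a, ((N : ℝ) * degT a - W) ^ 2 :=
    Finset.sum_le_sum_of_subset_of_nonneg (Finset.subset_univ _)
      (fun a _ _ => sq_nonneg _)
  have hC3 : ∑ a, ((N : ℝ) * degT a - W) ^ 2 = (N : ℝ) ^ 2 * Q - (N : ℝ) * W ^ 2 := by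
    have e1 : ∀ a : Fin N, ((N : ℝ) * degT a - W) ^ 2
        = (N : ℝ) ^ 2 * (degT a : ℝ) ^ 2 - 2 * N * W * (degT a : ℝ) + (W : ℝ) ^ 2 := by
      intro a
      ring
    rw [Finset.sum_congr rfl (fun a _ => e1 a)]
    rw [Finset.sum_add_distrib, Finset.sum_sub_distrib, ← Finset.mul_sum, ← Finset.mul_sum,
      ← c1R, Finset.sum_const, card_univ, Fintype.card_fin, nsmul_eq_mul, hQd]
    ring
  have hθ1' : θ ≤ 1 := by linarith
  have hvar : (N : ℝ) * Q - (W : ℝ) ^ 2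
      ≤ 3 * u ^ 6 * d ^ 2 * (N : ℝ) ^ 2 * (T.card : ℝ) ^ 2 + (T.card : ℝ) * (N : ℝ) ^ 2 := by
    have hDt0 : (0 : ℝ) ≤ (1 - θ) * d * N * T.card := by
      have h1θ : (0:ℝ) ≤ 1 - θ := by linarith
      clear hθu; positivity
    have hWsq : ((1 - θ) * d * N * T.card) ^ 2 ≤ (W : ℝ) ^ 2 := by nlinarith only [r1, hDt0]
    have h1 : (N : ℝ) * Q ≤ (1 + θ) * d ^ 2 * (N : ℝ) ^ 2 * (T.card : ℝ) ^ 2 + (N : ℝ) * W := by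
      calc (N : ℝ) * Q ≤ (N : ℝ) * ((T.card : ℝ) ^ 2 * ((1 + θ) * d ^ 2 * N) + W) :=
            mul_le_mul_of_nonneg_left r3 hN0.le
        _ = _ := by ring
    have h3 : (N : ℝ) * W ≤ (T.card : ℝ) * (N : ℝ) ^ 2 := by
      calc (N : ℝ) * W ≤ (N : ℝ) * ((T.card : ℝ) * N) := mul_le_mul_of_nonneg_left r2 hN0.le
        _ = _ := by ring
    have h4 : (0 : ℝ) ≤ u ^ 12 * d ^ 2 * (N : ℝ) ^ 2 * (T.card : ℝ) ^ 2 := by clear hθu; positivity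
    rw [hθu] at hWsq h1
    nlinarith only [hWsq, h1, h3, h4]
  -- the square-root quantity
  set rN : ℝ := Real.sqrt N with hrNd
  have hrN0 : 0 ≤ rN := Real.sqrt_nonneg _
  have hrN2 : rN ^ 2 = (N : ℝ) := Real.sq_sqrt hN0.le
  set R : ℝ := 2 * u ^ 3 * d * T.card * N + T.card * rN with hRd
  have hR0 : 0 ≤ R := by
    rw [hRd]
    have : (0:ℝ) ≤ 2 * u ^ 3 * d * T.card * N := by clear hθu; positivity
    have : (0:ℝ) ≤ (T.card : ℝ) * rN := by clear hθu; positivity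
    clear hθu; positivity
  have hNst : ((Sᶜ.card : ℕ) : ℝ) ≤ (T.card : ℝ) := by
    rw [hcompl]
    linarith
  have hsumsq0 : (0 : ℝ) ≤ ∑ a, ((N : ℝ) * degT a - W) ^ 2 :=
    Finset.sum_nonneg (fun a _ => sq_nonneg _)
  have hG'sq : G' ^ 2 ≤ (T.card : ℝ) * ((N : ℝ) ^ 2 * Q - (N : ℝ) * W ^ 2) := by
    calc G' ^ 2 ≤ ((Sᶜ.card : ℕ) : ℝ) * ∑ a ∈ Sᶜ, ((N : ℝ) * degT a - W) ^ 2 := hC1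
      _ ≤ ((Sᶜ.card : ℕ) : ℝ) * ∑ a, ((N : ℝ) * degT a - W) ^ 2 :=
          mul_le_mul_of_nonneg_left hC2 (Nat.cast_nonneg _)
      _ ≤ (T.card : ℝ) * ∑ a, ((N : ℝ) * degT a - W) ^ 2 :=
          mul_le_mul_of_nonneg_right hNst hsumsq0
      _ = (T.card : ℝ) * ((N : ℝ) ^ 2 * Q - (N : ℝ) * W ^ 2) := by rw [hC3]
  have hG'bound : G' ≤ (N : ℝ) * R := by
    have hB : (T.card : ℝ) * ((N : ℝ) ^ 2 * Q - (N : ℝ) * W ^ 2)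
        ≤ (T.card : ℝ) * (N : ℝ) * (3 * u ^ 6 * d ^ 2 * (N : ℝ) ^ 2 * (T.card : ℝ) ^ 2
            + (T.card : ℝ) * (N : ℝ) ^ 2) := by
      have e1 : (T.card : ℝ) * ((N : ℝ) ^ 2 * Q - (N : ℝ) * W ^ 2)
          = (T.card : ℝ) * (N : ℝ) * ((N : ℝ) * Q - (W : ℝ) ^ 2) := by ring
      rw [e1]
      apply mul_le_mul_of_nonneg_left hvar
      clear hθu; positivity
    have hB2 : (T.card : ℝ) * (N : ℝ) * (3 * u ^ 6 * d ^ 2 * (N : ℝ) ^ 2 * (T.card : ℝ) ^ 2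
            + (T.card : ℝ) * (N : ℝ) ^ 2) ≤ ((N : ℝ) * R) ^ 2 := by
      rw [hRd]
      have hexp : ((N : ℝ) * (2 * u ^ 3 * d * T.card * N + T.card * rN)) ^ 2
          = 4 * u ^ 6 * d ^ 2 * (T.card : ℝ) ^ 2 * (N : ℝ) ^ 4
            + 4 * u ^ 3 * d * (T.card : ℝ) ^ 2 * (N : ℝ) ^ 3 * rN
            + (T.card : ℝ) ^ 2 * (N : ℝ) ^ 2 * rN ^ 2 := by ring
      rw [hexp, hrN2]
      have ht3 : 3 * u ^ 6 * d ^ 2 * (N : ℝ) ^ 3 * (T.card : ℝ) ^ 3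
          ≤ 4 * u ^ 6 * d ^ 2 * (T.card : ℝ) ^ 2 * (N : ℝ) ^ 4 := by
        have h1 : (T.card : ℝ) ^ 3 ≤ (T.card : ℝ) ^ 2 * N := by
          nlinarith only [mul_nonneg (sq_nonneg (T.card : ℝ)) (sub_nonneg.mpr htR)]
        have h2 := mul_le_mul_of_nonneg_left h1
          (show (0:ℝ) ≤ 3 * u ^ 6 * d ^ 2 * (N : ℝ) ^ 3 by positivity)
        have h3 : (0:ℝ) ≤ u ^ 6 * d ^ 2 * (T.card : ℝ) ^ 2 * (N : ℝ) ^ 4 := by clear hθu; positivity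
        nlinarith only [h2, h3]
      have hcross : (0 : ℝ) ≤ 4 * u ^ 3 * d * (T.card : ℝ) ^ 2 * (N : ℝ) ^ 3 * rN := by
        clear hθu; positivity
      nlinarith only [ht3, hcross]
    have hsq : G' ^ 2 ≤ ((N : ℝ) * R) ^ 2 := le_trans hG'sq (le_trans hB hB2)
    nlinarith only [hsq, mul_nonneg hN0.le hR0]
  -- final assembly
  suffices hreal : (k : ℝ) * ((S.card : ℝ) + T.card) ≤ (k : ℝ) * N + (cut E S T : ℝ) by
    exact_mod_cast hreal
  rw [← mul_le_mul_iff_of_pos_right hN0]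
  have hNcut : (N : ℝ) * (cut E S T : ℝ) = (S.card : ℝ) * W - G' := by
    have e0 : (cut E S T : ℝ) = (W : ℝ) - ∑ a ∈ Sᶜ, (degT a : ℝ) := by
      rw [cutSum]
      linarith [hsplitsum]
    have e1 : (N : ℝ) * (∑ a ∈ Sᶜ, (degT a : ℝ)) = G' + ((N : ℝ) - S.card) * W := by
      rw [hG'sum]
      ring
    rw [e0, mul_sub, e1]
    ring
  have hgoal : (k : ℝ) * ((S.card : ℝ) + (T.card : ℝ) - N) * N
      ≤ (S.card : ℝ) * W - G' := by
    -- abbreviations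
    set x : ℝ := (S.card : ℝ) + (T.card : ℝ) - N with hxd
    have hx1 : (1 : ℝ) ≤ x := by rw [hxd]; linarith
    have hxN : x * N ≤ (S.card : ℝ) * T.card := by
      rw [hxd]
      nlinarith only [mul_nonneg (sub_nonneg.mpr hsR) (sub_nonneg.mpr htR)]
    have hk' : (k : ℝ) ≤ (1 - u ^ 2) * d * N + 1 := by rw [← hθ13]; exact hk
    have hk0 : (0 : ℝ) ≤ (k : ℝ) := Nat.cast_nonneg _
    have hcoef0 : (0 : ℝ) ≤ (1 - u ^ 2) * d * N := by
      have h1u : (0:ℝ) ≤ 1 - u ^ 2 := by nlinarith only [hu1, hu0.le]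
      exact mul_nonneg (mul_nonneg h1u hd0.le) hN0.le
    have step1 : (k : ℝ) * x * N ≤ ((1 - u ^ 2) * d * N + 1) * (x * N) := by
      have hxN0 : 0 ≤ x * N := by positivity
      calc (k : ℝ) * x * N = (k : ℝ) * (x * N) := by ring
        _ ≤ ((1 - u ^ 2) * d * N + 1) * (x * N) :=
            mul_le_mul_of_nonneg_right hk' hxN0
    have step2 : ((1 - u ^ 2) * d * N + 1) * (x * N)
        ≤ (1 - u ^ 2) * d * N * ((S.card : ℝ) * T.card) + (S.card : ℝ) * T.card := by
      have h1 := mul_le_mul_of_nonneg_left hxN hcoef0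
      nlinarith only [h1, hxN]
    -- the three error terms
    have hst0 : (0 : ℝ) ≤ (S.card : ℝ) * T.card := by clear hθu; positivity
    have p1 : (S.card : ℝ) * T.card ≤ (1 / 4) * u ^ 2 * d * N * ((S.card : ℝ) * T.card) := by
      nlinarith only [mul_le_mul_of_nonneg_right f1 hst0]
    have hp2s : 8 * u * N ≤ (S.card : ℝ) := by
      have hN0' : (0:ℝ) ≤ N := hN0.le
      have h := mul_le_mul_of_nonneg_right hu21 hN0'
      linarith only [h, hs2]
    have p2 : (N : ℝ) * (2 * u ^ 3 * d * T.card * N)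
        ≤ (1 / 4) * u ^ 2 * d * N * ((S.card : ℝ) * T.card) := by
      have h := mul_le_mul_of_nonneg_left hp2s
        (by clear hθu; positivity : (0:ℝ) ≤ (1 / 4) * u ^ 2 * d * N * T.card)
      nlinarith only [h]
    have hu2drN : (10 : ℝ) ≤ u ^ 2 * d * rN := by
      have hsq : (u ^ 2 * d * rN) ^ 2 = u ^ 4 * d ^ 2 * N := by
        rw [← hrN2]; ring
      nlinarith only [f2, hsq, mul_nonneg (mul_nonneg (sq_nonneg u) hd0.le) hrN0]
    have p3 : (N : ℝ) * ((T.card : ℝ) * rN)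
        ≤ (1 / 4) * u ^ 2 * d * N * ((S.card : ℝ) * T.card) := by
      -- 8 rN ≤ u^2 d N  and  N ≤ 2 s
      have h8 : 8 * rN ≤ u ^ 2 * d * N := by
        have h' : 10 * rN ≤ u ^ 2 * d * rN ^ 2 := by
          nlinarith only [hu2drN, hrN0]
        rw [hrN2] at h'
        linarith only [h', hrN0]
      have h4s : 4 * rN ≤ u ^ 2 * d * (S.card : ℝ) := by
        have hc0 : (0:ℝ) ≤ u ^ 2 * d := by positivity
        have h := mul_le_mul_of_nonneg_left hs2 hc0
        nlinarith only [h, h8]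
      have hmul := mul_le_mul_of_nonneg_left h4s
        (by clear hθu; positivity : (0:ℝ) ≤ (1 / 4) * (N : ℝ) * T.card)
      nlinarith only [hmul]
    have hu4 : u ^ 4 ≤ 1 / 4 := by
      calc u ^ 4 ≤ (1 / 21 : ℝ) ^ 4 := pow_le_pow_left₀ hu0.le hu21 4
        _ ≤ 1 / 4 := by norm_num
    have hu6 : u ^ 6 ≤ (1 / 4) * u ^ 2 := by nlinarith only [hu4, sq_nonneg u]
    -- lower bound for s W
    have hsW : (1 - u ^ 6) * d * N * T.card * S.card ≤ (S.card : ℝ) * W := by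
      have h := mul_le_mul_of_nonneg_left r1 hs0
      rw [hθu] at h
      nlinarith only [h]
    have hfinal : (1 - u ^ 2) * d * N * ((S.card : ℝ) * T.card) + (S.card : ℝ) * T.card
        + (N : ℝ) * R ≤ (1 - u ^ 6) * d * N * T.card * S.card := by
      rw [hRd]
      have hsplitR : (N : ℝ) * (2 * u ^ 3 * d * T.card * N + T.card * rN)
          = (N : ℝ) * (2 * u ^ 3 * d * T.card * N) + (N : ℝ) * ((T.card : ℝ) * rN) := by ring
      rw [hsplitR]
      have hcore : (0 : ℝ) ≤ (u ^ 2 - u ^ 6 - 3 / 4 * u ^ 2) * d * N * ((S.card : ℝ) * T.card) := by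
        have : (0:ℝ) ≤ (u ^ 2 / 4 - u ^ 6) := by linarith [hu6]
        have e : (u ^ 2 - u ^ 6 - 3 / 4 * u ^ 2) = (u ^ 2 / 4 - u ^ 6) := by ring
        rw [e]
        clear hθu; positivity
      nlinarith only [p1, p2, p3, hcore]
    calc (k : ℝ) * x * N ≤ (1 - u ^ 2) * d * N * ((S.card : ℝ) * T.card)
          + (S.card : ℝ) * T.card := le_trans step1 step2
      _ ≤ (1 - u ^ 6) * d * N * T.card * S.card - (N : ℝ) * R := by linarith [hfinal]
      _ ≤ (S.card : ℝ) * W - G' := by linarith [hsW, hG'bound]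
  calc (k : ℝ) * ((S.card : ℝ) + T.card) * N
      = (k : ℝ) * N * N + (k : ℝ) * ((S.card : ℝ) + (T.card : ℝ) - N) * N := by ring
    _ ≤ (k : ℝ) * N * N + ((S.card : ℝ) * W - G') := by linarith [hgoal]
    _ = ((k : ℝ) * N + (cut E S T : ℝ)) * N := by rw [← hNcut]; ring

lemma mem_swap (E : Finset (Fin N × Fin N)) (p : Fin N × Fin N) :
    p ∈ E.image Prod.swap ↔ p.swap ∈ E := by
  constructor
  · intro h
    obtain ⟨q, hq, rfl⟩ := Finset.mem_image.mp h
    rwa [Prod.swap_swap]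
  · intro h
    exact Finset.mem_image.mpr ⟨p.swap, h, Prod.swap_swap p⟩

lemma deg_swap (E : Finset (Fin N × Fin N)) (b : Fin N) :
    ((E.image Prod.swap).filter fun p => p.2 = b).card = (E.filter fun p => p.1 = b).card := by
  classical
  rw [Finset.filter_image]
  rw [Finset.card_image_of_injective _ Prod.swap_injective]
  congr 1

lemma cod_swap (E : Finset (Fin N × Fin N)) (b₁ b₂ : Fin N) :
    (univ.filter fun a => (a, b₁) ∈ E.image Prod.swap ∧ (a, b₂) ∈ E.image Prod.swap)
      = univ.filter fun a => (b₁, a) ∈ E ∧ (b₂, a) ∈ E := by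
  apply Finset.filter_congr
  intro a _
  rw [mem_swap, mem_swap]
  rfl

lemma cut_swap (E : Finset (Fin N × Fin N)) (S T : Finset (Fin N)) :
    cut (E.image Prod.swap) T S = cut E S T := by
  classical
  unfold cut
  rw [Finset.filter_image, Finset.card_image_of_injective _ Prod.swap_injective]
  congr 1
  apply Finset.filter_congr
  intro p _
  constructor
  · rintro ⟨h1, h2⟩; exact ⟨h2, h1⟩
  · rintro ⟨h1, h2⟩; exact ⟨h2, h1⟩

end Stmt8

open scoped Classical in
/-- there are absolute constants `θ₀ ∈ (0,1)` and `C` such that every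
bipartite graph with parts of size `N`, minimum degree at least `(1-θ)dN`, codegrees
(within each part) at most `(1+θ)d²N`, with `0 < θ ≤ θ₀`, `d ∈ (0,1]` and
`θ^{4/3} d² N ≥ C`, contains at least `(1-θ^{1/3})dN` pairwise edge-disjoint perfect
matchings. -/
theorem stmt_8 :
    ∃ θ₀ : ℝ, θ₀ ∈ Set.Ioo (0 : ℝ) 1 ∧ ∃ C : ℝ,
      ∀ (N : ℕ) (E : Finset (Fin N × Fin N)) (θ d : ℝ),
        0 < θ → θ ≤ θ₀ → 0 < d → d ≤ 1 →
        (∀ a : Fin N, (1 - θ) * d * N ≤ ((E.filter fun e => e.1 = a).card : ℝ)) →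
        (∀ b : Fin N, (1 - θ) * d * N ≤ ((E.filter fun e => e.2 = b).card : ℝ)) →
        (∀ a₁ a₂ : Fin N, a₁ ≠ a₂ →
          ((Finset.univ.filter fun b => (a₁, b) ∈ E ∧ (a₂, b) ∈ E).card : ℝ)
            ≤ (1 + θ) * d ^ 2 * N) →
        (∀ b₁ b₂ : Fin N, b₁ ≠ b₂ →
          ((Finset.univ.filter fun a => (a, b₁) ∈ E ∧ (a, b₂) ∈ E).card : ℝ)
            ≤ (1 + θ) * d ^ 2 * N) →
        C ≤ θ ^ ((4 : ℝ) / 3) * d ^ 2 * N →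
        ∃ 𝒮 : Finset (Finset (Fin N × Fin N)),
          (1 - θ ^ ((1 : ℝ) / 3)) * d * N ≤ (𝒮.card : ℝ) ∧
          (∀ M ∈ 𝒮, IsPMatching N E M) ∧
          (𝒮 : Set (Finset (Fin N × Fin N))).Pairwise Disjoint := by
  refine ⟨1e-8, ⟨by norm_num, by norm_num⟩, 100, ?_⟩
  intro N E θ d hθ0 hθθ0 hd0 hd1 hdegA hdegB hcodA hcodB hC
  have hN : 0 < N := by
    by_contra h
    have hN0 : N = 0 := by omega
    rw [hN0] at hC
    norm_num at hC
  have h13 : θ ^ ((1 : ℝ) / 3) ≤ 1 :=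
    Real.rpow_le_one hθ0.le (by linarith) (by norm_num)
  have hk0 : (0 : ℝ) ≤ (1 - θ ^ ((1 : ℝ) / 3)) * d * (N : ℝ) :=
    mul_nonneg (mul_nonneg (by linarith) hd0.le) (Nat.cast_nonneg N)
  set k : ℕ := ⌈(1 - θ ^ ((1 : ℝ) / 3)) * d * (N : ℝ)⌉₊ with hkdef
  have hkub : (k : ℝ) ≤ (1 - θ ^ ((1 : ℝ) / 3)) * d * N + 1 := (Nat.ceil_lt_add_one hk0).le
  have hcut : ∀ S T : Finset (Fin N), k * (S.card + T.card) ≤ k * N + Stmt8.cut E S T := by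
    intro S T
    by_cases hST : T.card ≤ S.card
    · exact Stmt8.key hN E θ d k hθ0 hθθ0 hd0 hd1 hdegB hcodB hC hkub S T hST
    · have hTS : S.card ≤ T.card := le_of_not_ge hST
      have hdegB' : ∀ b, (1 - θ) * d * N
          ≤ (((E.image Prod.swap).filter fun e => e.2 = b).card : ℝ) := by
        intro b
        rw [Stmt8.deg_swap]
        exact hdegA b
      have hcodB' : ∀ b₁ b₂ : Fin N, b₁ ≠ b₂ →
          ((univ.filter fun a => (a, b₁) ∈ E.image Prod.swap
              ∧ (a, b₂) ∈ E.image Prod.swap).card : ℝ) ≤ (1 + θ) * d ^ 2 * N := by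
        intro b₁ b₂ hne
        rw [Stmt8.cod_swap]
        exact hcodA b₁ b₂ hne
      have h := Stmt8.key hN (E.image Prod.swap) θ d k hθ0 hθθ0 hd0 hd1 hdegB' hcodB'
        hC hkub T S hTS
      rw [Stmt8.cut_swap] at h
      rw [Nat.add_comm S.card T.card]
      exact h
  obtain ⟨F, hFE, hd1F, hd2F⟩ := Stmt8.exists_regular E k hcut
  obtain ⟨𝒮, h𝒮card, h𝒮mem, h𝒮pair⟩ := Stmt8.decomp hN k F hd1F hd2F
  refine ⟨𝒮, ?_, ?_, h𝒮pair⟩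
  · rw [h𝒮card]
    exact Nat.le_ceil _
  · intro M hM
    obtain ⟨hsub, σ, hσ⟩ := h𝒮mem M hM
    exact ⟨fun p hp => hFE (hsub hp), σ, hσ⟩
end

section
/- Let S_n denote the set of permutations of [n], and let f : S_n → ℝ be a function such that |f(π) − f(π')| ≤ u whenever the permutation π' is obtained from π by transposing two elements. If π is chosen uniformly at random from S_n, then for every t > 0, Pr(f(π) − E[f(π)] ≤ −t) ≤ exp(−2t²/(n u²)). -/
open Finset




lemma hoeff_log_le (p : ℝ) (hp0 : 0 ≤ p) (hp1 : p ≤ 1) (h : ℝ) :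
    Real.log ((1 - p) + p * Real.exp h) ≤ h ^ 2 / 8 + p * h := by
  set D : ℝ → ℝ := fun x => (1 - p) + p * Real.exp x with hD
  have hDpos : ∀ x, 0 < D x := by
    intro x
    simp only [hD]
    rcases eq_or_lt_of_le hp0 with hp | hp
    · simp [← hp]
    · nlinarith [Real.exp_pos x, mul_pos hp (Real.exp_pos x)]
  have hDderiv : ∀ x, HasDerivAt D (p * Real.exp x) x := by
    intro x
    rw [hD]; exact ((Real.hasDerivAt_exp x).const_mul p).const_add (1 - p)
  clear_value D
  set G1 : ℝ → ℝ := fun x => x / 4 + p - p * Real.exp x / D x with hG1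
  set G : ℝ → ℝ := fun x => x ^ 2 / 8 + p * x - Real.log (D x) with hG
  have hGderiv : ∀ x, HasDerivAt G (G1 x) x := by
    intro x
    have hlog : HasDerivAt (fun x => Real.log (D x)) (p * Real.exp x / D x) x :=
      (hDderiv x).log (hDpos x).ne'
    have h1 : HasDerivAt (fun x : ℝ => x ^ 2 / 8 + p * x) (x / 4 + p) x := by
      have := ((hasDerivAt_pow 2 x).div_const 8).add ((hasDerivAt_id x).const_mul p)
      refine this.congr_deriv ?_
      norm_num
      ring
    exact h1.sub hlog
  have hG1deriv : ∀ x, HasDerivAt G1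
      ((fun x => 1 / 4 - p * (1 - p) * Real.exp x / (D x) ^ 2) x) x := by
    intro x
    have hdiv : HasDerivAt (fun x => p * Real.exp x / D x)
        ((p * Real.exp x * D x - p * Real.exp x * (p * Real.exp x)) / (D x) ^ 2) x :=
      ((Real.hasDerivAt_exp x).const_mul p).div (hDderiv x) (hDpos x).ne'
    have h1 : HasDerivAt (fun x : ℝ => x / 4 + p) (1 / 4) x := by
      simpa using ((hasDerivAt_id x).div_const 4).add_const p
    have H := h1.sub hdiv
    have hne : D x ≠ 0 := (hDpos x).ne'
    have hx : D x = (1 - p) + p * Real.exp x := by rw [hD]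
    have hne' : (1 - p) + p * Real.exp x ≠ 0 := hx ▸ hne
    have heq : 1 / 4 - (p * Real.exp x * D x - p * Real.exp x * (p * Real.exp x)) / D x ^ 2
        = 1 / 4 - p * (1 - p) * Real.exp x / D x ^ 2 := by
      rw [hx]
      field_simp
      ring
    rw [heq] at H
    exact H
  have hG1mono : Monotone G1 := by
    apply monotone_of_hasDerivAt_nonneg hG1deriv
    intro x
    simp only [Pi.zero_apply]
    have hqpos : (0:ℝ) < D x ^ 2 := pow_pos (hDpos x) 2
    have key : 4 * (p * (1 - p) * Real.exp x) ≤ D x ^ 2 := by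
      have h2 : D x = (1 - p) + p * Real.exp x := by rw [hD]
      rw [h2]
      nlinarith [sq_nonneg ((1 - p) - p * Real.exp x)]
    have : p * (1 - p) * Real.exp x / D x ^ 2 ≤ 1 / 4 := by
      rw [div_le_iff₀ hqpos]
      linarith
    linarith
  have hG10 : G1 0 = 0 := by
    have : D 0 = 1 := by simp [hD]
    simp [hG1, this]
  have hG0 : G 0 = 0 := by
    have : D 0 = 1 := by simp [hD]
    simp [hG, this]
  have hGnonneg : 0 ≤ G h := by
    rcases le_total 0 h with hh | hh
    · have hmono : MonotoneOn G (Set.Ici 0) := by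
        apply monotoneOn_of_hasDerivWithinAt_nonneg (convex_Ici 0)
          (fun x _ => (hGderiv x).continuousAt.continuousWithinAt)
          (fun x _ => (hGderiv x).hasDerivWithinAt)
        intro x hx
        rw [interior_Ici] at hx
        have := hG1mono (le_of_lt hx)
        rw [hG10] at this
        exact this
      have := hmono Set.self_mem_Ici hh hh
      rwa [hG0] at this
    · have hanti : AntitoneOn G (Set.Iic 0) := by
        apply antitoneOn_of_hasDerivWithinAt_nonpos (convex_Iic 0)
          (fun x _ => (hGderiv x).continuousAt.continuousWithinAt)
          (fun x _ => (hGderiv x).hasDerivWithinAt)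
        intro x hx
        rw [interior_Iic] at hx
        have := hG1mono (le_of_lt hx)
        rw [hG10] at this
        exact this
      have := hanti hh Set.self_mem_Iic hh
      rwa [hG0] at this
  have hGh : G h = h ^ 2 / 8 + p * h - Real.log ((1 - p) + p * Real.exp h) := by
    rw [hG, hD]
  linarith [hGh ▸ hGnonneg]


open Finset

lemma hoeff_combo (a b : ℝ) (ha : a ≤ 0) (hb : 0 ≤ b) (hab : a < b) :
    b * Real.exp a - a * Real.exp b ≤ (b - a) * Real.exp ((b - a) ^ 2 / 8) := by
  set h := b - a with hh
  have hhpos : 0 < h := by simp only [hh]; linarith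
  set p := -a / h with hp
  have hp0 : 0 ≤ p := div_nonneg (by linarith) hhpos.le
  have hp1 : p ≤ 1 := by
    rw [hp, div_le_one hhpos]
    linarith
  have key := hoeff_log_le p hp0 hp1 h
  have hDpos : 0 < (1 - p) + p * Real.exp h := by
    nlinarith [Real.exp_pos h, mul_nonneg hp0 (Real.exp_pos h).le]
  have hle : (1 - p) + p * Real.exp h ≤ Real.exp (h ^ 2 / 8 + p * h) := by
    rw [← Real.log_le_iff_le_exp hDpos]
    exact key
  have h1p : 1 - p = b / h := by
    rw [hp]
    field_simp [hh]
    linarith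
  have hph : p * h = -a := by
    rw [hp]
    field_simp
  have hexp : Real.exp (h ^ 2 / 8 + p * h) = Real.exp (h ^ 2 / 8) * Real.exp (-a) := by
    rw [← Real.exp_add, hph]
  have hmul : 0 < h * Real.exp a := mul_pos hhpos (Real.exp_pos a)
  have hstep := mul_le_mul_of_nonneg_left hle hmul.le
  have heb : Real.exp b = Real.exp a * Real.exp h := by
    rw [← Real.exp_add, hh]; ring_nf
  calc b * Real.exp a - a * Real.exp b
      = h * Real.exp a * ((1 - p) + p * Real.exp h) := by
        rw [h1p, hp, heb]
        field_simp
        ring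
    _ ≤ h * Real.exp a * Real.exp (h ^ 2 / 8 + p * h) := hstep
    _ = h * (Real.exp a * Real.exp (-a)) * Real.exp (h ^ 2 / 8) := by rw [hexp]; ring
    _ = h * Real.exp (h ^ 2 / 8) := by
        rw [Real.exp_neg, mul_inv_cancel₀ (Real.exp_ne_zero a), mul_one]
    _ = (b - a) * Real.exp ((b - a) ^ 2 / 8) := by rw [hh]

lemma sum_exp_le {ι : Type*} [Fintype ι] [Nonempty ι] (y : ι → ℝ)
    (hmean : ∑ k, y k = 0) (c : ℝ) (hc : ∀ k l, |y k - y l| ≤ c) :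
    ∑ k, Real.exp (y k) ≤ (Fintype.card ι : ℝ) * Real.exp (c ^ 2 / 8) := by
  obtain ⟨ka, -, hka⟩ := Finset.exists_min_image univ y univ_nonempty
  obtain ⟨kb, -, hkb⟩ := Finset.exists_max_image univ y univ_nonempty
  set a := y ka with hadef
  set b := y kb with hbdef
  have hN : (0:ℝ) < Fintype.card ι := by positivity
  have ha : a ≤ 0 := by
    by_contra hcon
    push_neg at hcon
    have : (0:ℝ) < ∑ k, y k :=
      Finset.sum_pos (fun k _ => lt_of_lt_of_le hcon (hka k (mem_univ k))) univ_nonempty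
    rw [hmean] at this; exact lt_irrefl 0 this
  have hb : 0 ≤ b := by
    by_contra hcon
    push_neg at hcon
    have : ∑ k, y k < 0 :=
      Finset.sum_neg (fun k _ => lt_of_le_of_lt (hkb k (mem_univ k)) hcon) univ_nonempty
    rw [hmean] at this; exact lt_irrefl 0 this
  have hbac : b - a ≤ c := by
    have := hc kb ka
    rw [abs_le] at this
    linarith [this.2]
  rcases eq_or_lt_of_le (le_trans ha hb : a ≤ b) with heq | hab
  · have ha0 : a = 0 := le_antisymm ha (heq ▸ hb)
    have hall : ∀ k, y k = 0 := by
      intro k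
      have h1 := hka k (mem_univ k)
      have h2 := hkb k (mem_univ k)
      rw [← heq, ha0] at h2
      rw [ha0] at h1
      linarith
    simp only [hall, Real.exp_zero]
    rw [Finset.sum_const, card_univ, nsmul_eq_mul, mul_one]
    have : (1:ℝ) ≤ Real.exp (c ^ 2 / 8) := Real.one_le_exp (by positivity)
    nlinarith
  · have hba : (0:ℝ) < b - a := by linarith
    have hconv : ∀ k, Real.exp (y k) ≤
        ((b - y k) * Real.exp a + (y k - a) * Real.exp b) / (b - a) := by
      intro k
      have h1 := hka k (mem_univ k)
      have h2 := hkb k (mem_univ k)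
      have hθ0 : 0 ≤ (b - y k) / (b - a) := div_nonneg (by linarith) hba.le
      have hη0 : 0 ≤ (y k - a) / (b - a) := div_nonneg (by linarith) hba.le
      have hsum : (b - y k) / (b - a) + (y k - a) / (b - a) = 1 := by
        field_simp
        ring
      have hcv := convexOn_exp.2 (Set.mem_univ a) (Set.mem_univ b) hθ0 hη0 hsum
      simp only [smul_eq_mul] at hcv
      have harg : (b - y k) / (b - a) * a + (y k - a) / (b - a) * b = y k := by
        field_simp
        ring
      rw [harg] at hcv
      calc Real.exp (y k) ≤ (b - y k) / (b - a) * Real.exp a + (y k - a) / (b - a) * Real.exp b :=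
            hcv
        _ = ((b - y k) * Real.exp a + (y k - a) * Real.exp b) / (b - a) := by ring
    calc ∑ k, Real.exp (y k)
        ≤ ∑ k, ((b - y k) * Real.exp a + (y k - a) * Real.exp b) / (b - a) :=
          Finset.sum_le_sum fun k _ => hconv k
      _ = (∑ k, ((b - y k) * Real.exp a + (y k - a) * Real.exp b)) / (b - a) := by
          rw [Finset.sum_div]
      _ = (∑ k, ((b * Real.exp a - a * Real.exp b) + y k * (Real.exp b - Real.exp a))) / (b - a) := by
          congr 1
          exact Finset.sum_congr rfl fun k _ => by ring
      _ = ((Fintype.card ι : ℝ) * (b * Real.exp a - a * Real.exp b)) / (b - a) := by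
          rw [Finset.sum_add_distrib, ← Finset.sum_mul, hmean, zero_mul, add_zero,
            Finset.sum_const, card_univ, nsmul_eq_mul]
      _ ≤ ((Fintype.card ι : ℝ) * ((b - a) * Real.exp ((b - a) ^ 2 / 8))) / (b - a) := by
          gcongr
          exact hoeff_combo a b ha hb hab
      _ = (Fintype.card ι : ℝ) * Real.exp ((b - a) ^ 2 / 8) := by
          field_simp
      _ ≤ (Fintype.card ι : ℝ) * Real.exp (c ^ 2 / 8) := by
          gcongr


open Finset Equiv

def permExt {n : ℕ} (e : Equiv.Perm (Fin n)) : Equiv.Perm (Fin (n + 1)) :=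
  Equiv.Perm.decomposeFin.symm (0, e)

lemma permExt_zero {n : ℕ} (e : Equiv.Perm (Fin n)) : permExt e 0 = 0 := by
  simp [permExt, Equiv.Perm.decomposeFin_symm_apply_zero]

lemma permExt_succ {n : ℕ} (e : Equiv.Perm (Fin n)) (x : Fin n) :
    permExt e x.succ = (e x).succ := by
  simp [permExt, Equiv.Perm.decomposeFin_symm_apply_succ]

lemma permExt_mul {n : ℕ} (e₁ e₂ : Equiv.Perm (Fin n)) :
    permExt (e₁ * e₂) = permExt e₁ * permExt e₂ := by
  ext x
  refine Fin.cases ?_ ?_ x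
  · simp [permExt_zero, Equiv.Perm.mul_apply]
  · intro y
    simp [permExt_succ, Equiv.Perm.mul_apply]

lemma permExt_swap {n : ℕ} (i j : Fin n) :
    permExt (Equiv.swap i j) = Equiv.swap i.succ j.succ := by
  ext x
  refine Fin.cases ?_ ?_ x
  · rw [permExt_zero, Equiv.swap_apply_of_ne_of_ne (Ne.symm (Fin.succ_ne_zero i))
      (Ne.symm (Fin.succ_ne_zero j))]
  · intro y
    rw [permExt_succ]
    rcases eq_or_ne y i with rfl | hyi
    · simp
    · rcases eq_or_ne y j with rfl | hyj
      · simp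
      · rw [Equiv.swap_apply_of_ne_of_ne hyi hyj,
          Equiv.swap_apply_of_ne_of_ne (fun h => hyi (Fin.succ_injective _ h))
            (fun h => hyj (Fin.succ_injective _ h))]

lemma decomp_eq {n : ℕ} (p : Fin (n + 1)) (e : Equiv.Perm (Fin n)) :
    Equiv.Perm.decomposeFin.symm (p, e) = Equiv.swap 0 p * permExt e := by
  ext x
  refine Fin.cases ?_ ?_ x
  · rw [Equiv.Perm.decomposeFin_symm_apply_zero, Equiv.Perm.mul_apply, permExt_zero,
      Equiv.swap_apply_left]
  · intro y
    rw [Equiv.Perm.decomposeFin_symm_apply_succ, Equiv.Perm.mul_apply, permExt_succ]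


open Finset Equiv

lemma mgf_bound (u lam : ℝ) :
    ∀ (n : ℕ) (f : Equiv.Perm (Fin n) → ℝ),
      (∀ (π : Equiv.Perm (Fin n)) (i j : Fin n), |f (π * Equiv.swap i j) - f π| ≤ u) →
      ∑ π : Equiv.Perm (Fin n),
          Real.exp (lam * ((∑ π' : Equiv.Perm (Fin n), f π') /
            (Fintype.card (Equiv.Perm (Fin n)) : ℝ) - f π))
        ≤ (Fintype.card (Equiv.Perm (Fin n)) : ℝ) * Real.exp (lam ^ 2 * n * u ^ 2 / 8) := by
  intro n
  induction n with
  | zero =>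
    intro f _
    haveI : Unique (Equiv.Perm (Fin 0)) :=
      ⟨⟨1⟩, fun a => Equiv.ext fun x => x.elim0⟩
    rw [Fintype.card_unique]
    simp
  | succ n ih =>
    intro f hf
    rw [Nat.cast_succ]
    have hu : 0 ≤ u := by
      have h00 : Equiv.swap (0 : Fin (n + 1)) 0 = 1 := by
        rw [Equiv.swap_self]; rfl
      have := hf 1 0 0
      rw [h00, mul_one, sub_self, abs_zero] at this
      exact this
    have hNnpos : (0:ℝ) < (Fintype.card (Equiv.Perm (Fin n)) : ℝ) := by positivity
    set Nn : ℝ := (Fintype.card (Equiv.Perm (Fin n)) : ℝ) with hNn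
    have hcard : (Fintype.card (Equiv.Perm (Fin (n + 1))) : ℝ) = (n + 1) * Nn := by
      rw [hNn, Fintype.card_congr (Equiv.Perm.decomposeFin (n := n)), Fintype.card_prod,
        Fintype.card_fin]
      push_cast
      ring
    have hf_left : ∀ (π : Equiv.Perm (Fin (n + 1))) (a b : Fin (n + 1)),
        |f (Equiv.swap a b * π) - f π| ≤ u := by
      intro π a b
      have h1 : Equiv.swap (π⁻¹ a) (π⁻¹ b) = π⁻¹ * Equiv.swap a b * π⁻¹⁻¹ :=
        Equiv.swap_apply_apply π⁻¹ a b
      have h2 : Equiv.swap a b * π = π * Equiv.swap (π⁻¹ a) (π⁻¹ b) := by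
        rw [h1]
        group
      rw [h2]
      exact hf π _ _
    set g : Fin (n + 1) → Equiv.Perm (Fin n) → ℝ :=
      fun p e => f (Equiv.swap 0 p * permExt e) with hg
    have hglip : ∀ p (e : Equiv.Perm (Fin n)) (i j : Fin n),
        |g p (e * Equiv.swap i j) - g p e| ≤ u := by
      intro p e i j
      have : g p (e * Equiv.swap i j)
          = f ((Equiv.swap 0 p * permExt e) * Equiv.swap i.succ j.succ) := by
        rw [hg]
        simp only []
        rw [permExt_mul, permExt_swap, mul_assoc]
      rw [this]
      exact hf _ _ _
    set μ : Fin (n + 1) → ℝ := fun p => (∑ e : Equiv.Perm (Fin n), g p e) / Nn with hμ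
    have hsum : ∀ (F : Equiv.Perm (Fin (n + 1)) → ℝ),
        ∑ π : Equiv.Perm (Fin (n + 1)), F π
          = ∑ p : Fin (n + 1), ∑ e : Equiv.Perm (Fin n), F (Equiv.swap 0 p * permExt e) := by
      intro F
      rw [← Equiv.sum_comp (Equiv.Perm.decomposeFin (n := n)).symm F, Fintype.sum_prod_type]
      exact Finset.sum_congr rfl fun p _ => Finset.sum_congr rfl fun e _ => by rw [decomp_eq]
    set M : ℝ := (∑ π : Equiv.Perm (Fin (n + 1)), f π) /
      (Fintype.card (Equiv.Perm (Fin (n + 1))) : ℝ) with hM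
    have h_mu_sum : ∑ p : Fin (n + 1), μ p = (n + 1) * M := by
      rw [hM, hcard, hsum f]
      simp only [hμ]
      rw [← Finset.sum_div]
      field_simp
      ring
    -- coupling: |μ p - μ q| ≤ u
    have hpair : ∀ p q : Fin (n + 1), ∃ ψ : Equiv.Perm (Fin n) ≃ Equiv.Perm (Fin n),
        ∀ e, |g p e - g q (ψ e)| ≤ u := by
      intro p q
      rcases eq_or_ne p 0 with rfl | hp
      · refine ⟨Equiv.refl _, fun e => ?_⟩
        have h0 : g 0 e = f (permExt e) := by
          rw [hg]; simp [Equiv.swap_self]; exact congrArg f (one_mul (permExt e))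
        rw [Equiv.refl_apply, h0, abs_sub_comm]
        exact hf_left (permExt e) 0 q
      · rcases eq_or_ne q 0 with rfl | hq
        · refine ⟨Equiv.refl _, fun e => ?_⟩
          have h0 : g 0 e = f (permExt e) := by
            rw [hg]; simp [Equiv.swap_self]; exact congrArg f (one_mul (permExt e))
          rw [Equiv.refl_apply, h0]
          exact hf_left (permExt e) 0 p
        · rcases eq_or_ne p q with rfl | hpq
          · exact ⟨Equiv.refl _, fun e => by simp [hu]⟩
          · refine ⟨Equiv.mulLeft (Equiv.swap (p.pred hp) (q.pred hq)), fun e => ?_⟩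
            have hkey : g q (Equiv.swap (p.pred hp) (q.pred hq) * e)
                = f (Equiv.swap p q * (Equiv.swap 0 p * permExt e)) := by
              rw [hg]
              simp only []
              rw [permExt_mul, permExt_swap, Fin.succ_pred, Fin.succ_pred]
              have hid : Equiv.swap 0 q * Equiv.swap p q = Equiv.swap p q * Equiv.swap 0 p := by
                have hconj : Equiv.swap ((Equiv.swap p q) 0) ((Equiv.swap p q) p)
                    = Equiv.swap p q * Equiv.swap 0 p * (Equiv.swap p q)⁻¹ :=
                  Equiv.swap_apply_apply (Equiv.swap p q) 0 p
                rw [Equiv.swap_apply_of_ne_of_ne (Ne.symm hp) (Ne.symm hq),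
                  Equiv.swap_apply_left] at hconj
                rw [hconj, Equiv.swap_inv]
                rw [mul_assoc, mul_assoc, Equiv.swap_mul_self, mul_one]
              rw [← mul_assoc, hid, mul_assoc]
            rw [Equiv.coe_mulLeft, hkey, abs_sub_comm]
            exact hf_left _ p q
    have hμpair : ∀ p q : Fin (n + 1), |μ p - μ q| ≤ u := by
      intro p q
      obtain ⟨ψ, hψ⟩ := hpair p q
      have hsum_eq : ∑ e : Equiv.Perm (Fin n), g q e
          = ∑ e : Equiv.Perm (Fin n), g q (ψ e) := (Equiv.sum_comp ψ (g q)).symm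
      have habs : |(∑ e : Equiv.Perm (Fin n), g p e) - ∑ e : Equiv.Perm (Fin n), g q e|
          ≤ Nn * u := by
        rw [hsum_eq, ← Finset.sum_sub_distrib]
        calc |∑ e : Equiv.Perm (Fin n), (g p e - g q (ψ e))|
            ≤ ∑ e : Equiv.Perm (Fin n), |g p e - g q (ψ e)| := Finset.abs_sum_le_sum_abs _ _
          _ ≤ ∑ _e : Equiv.Perm (Fin n), u := Finset.sum_le_sum fun e _ => hψ e
          _ = Nn * u := by rw [Finset.sum_const, card_univ, nsmul_eq_mul, hNn]
      rw [hμ]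
      simp only []
      rw [div_sub_div_same, abs_div, abs_of_pos hNnpos, div_le_iff₀ hNnpos]
      linarith [habs]
    -- outer Hoeffding
    have houter : ∑ p : Fin (n + 1), Real.exp (lam * (M - μ p))
        ≤ (n + 1 : ℝ) * Real.exp (lam ^ 2 * u ^ 2 / 8) := by
      have hmean : ∑ p : Fin (n + 1), lam * (M - μ p) = 0 := by
        rw [← Finset.mul_sum, Finset.sum_sub_distrib, Finset.sum_const, card_univ,
          Fintype.card_fin, h_mu_sum, nsmul_eq_mul]
        push_cast
        ring_nf
      have hc : ∀ p q : Fin (n + 1), |lam * (M - μ p) - lam * (M - μ q)| ≤ |lam| * u := by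
        intro p q
        have : lam * (M - μ p) - lam * (M - μ q) = lam * (μ q - μ p) := by ring
        rw [this, abs_mul]
        exact mul_le_mul_of_nonneg_left (hμpair q p) (abs_nonneg lam)
      have := sum_exp_le (fun p : Fin (n + 1) => lam * (M - μ p)) hmean (|lam| * u) hc
      rw [Fintype.card_fin] at this
      have hsq : (|lam| * u) ^ 2 = lam ^ 2 * u ^ 2 := by
        rw [mul_pow, sq_abs]
      rw [hsq] at this
      push_cast at this ⊢
      exact this
    -- main chain
    calc ∑ π : Equiv.Perm (Fin (n + 1)), Real.exp (lam * (M - f π))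
        = ∑ p : Fin (n + 1), ∑ e : Equiv.Perm (Fin n), Real.exp (lam * (M - g p e)) :=
          hsum _
      _ = ∑ p : Fin (n + 1), ∑ e : Equiv.Perm (Fin n),
            Real.exp (lam * (M - μ p)) * Real.exp (lam * (μ p - g p e)) := by
          refine Finset.sum_congr rfl fun p _ => Finset.sum_congr rfl fun e _ => ?_
          rw [← Real.exp_add]
          ring_nf
      _ = ∑ p : Fin (n + 1), Real.exp (lam * (M - μ p)) *
            ∑ e : Equiv.Perm (Fin n), Real.exp (lam * (μ p - g p e)) := by
          refine Finset.sum_congr rfl fun p _ => ?_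
          rw [Finset.mul_sum]
      _ ≤ ∑ p : Fin (n + 1), Real.exp (lam * (M - μ p)) *
            (Nn * Real.exp (lam ^ 2 * n * u ^ 2 / 8)) := by
          refine Finset.sum_le_sum fun p _ => ?_
          refine mul_le_mul_of_nonneg_left ?_ (Real.exp_pos _).le
          exact ih (g p) (hglip p)
      _ = (∑ p : Fin (n + 1), Real.exp (lam * (M - μ p))) *
            (Nn * Real.exp (lam ^ 2 * n * u ^ 2 / 8)) := by
          rw [← Finset.sum_mul]
      _ ≤ ((n + 1 : ℝ) * Real.exp (lam ^ 2 * u ^ 2 / 8)) *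
            (Nn * Real.exp (lam ^ 2 * n * u ^ 2 / 8)) := by
          refine mul_le_mul_of_nonneg_right houter ?_
          positivity
      _ = (Fintype.card (Equiv.Perm (Fin (n + 1))) : ℝ) *
            Real.exp (lam ^ 2 * (n + 1) * u ^ 2 / 8) := by
          rw [hcard, mul_mul_mul_comm, ← Real.exp_add]
          congr 1
          ring_nf


open scoped Classical in
/-- Azuma–Hoeffding/McDiarmid type concentration for a uniformly random
permutation: if `|f(π) - f(π')| ≤ u` whenever `π'` is obtained from `π` by composing with a
transposition, then `Pr(f(π) - E[f] ≤ -t) ≤ exp(-2t²/(n u²))` for every `t > 0`,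
where `π` is uniform on the permutations of `[n]`. -/
theorem stmt_17 (n : ℕ) (u : ℝ) (f : Equiv.Perm (Fin n) → ℝ)
    (hf : ∀ (π : Equiv.Perm (Fin n)) (i j : Fin n),
      |f (π * Equiv.swap i j) - f π| ≤ u)
    (t : ℝ) (ht : 0 < t) :
    ((Finset.univ.filter fun π : Equiv.Perm (Fin n) =>
        f π - (∑ π' : Equiv.Perm (Fin n), f π') / (Fintype.card (Equiv.Perm (Fin n)) : ℝ)
          ≤ -t).card : ℝ) / (Fintype.card (Equiv.Perm (Fin n)) : ℝ)
      ≤ Real.exp (-2 * t ^ 2 / (n * u ^ 2)) := by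

  have hNpos : (0:ℝ) < (Fintype.card (Equiv.Perm (Fin n)) : ℝ) := by positivity
  set N : ℝ := (Fintype.card (Equiv.Perm (Fin n)) : ℝ) with hN
  set M : ℝ := (∑ π' : Equiv.Perm (Fin n), f π') / N with hM
  set s := Finset.univ.filter fun π : Equiv.Perm (Fin n) => f π - M ≤ -t with hs
  by_cases hnu : (n : ℝ) * u ^ 2 = 0
  · rw [hnu, div_zero, Real.exp_zero, div_le_one hNpos, hN]
    have : s.card ≤ Fintype.card (Equiv.Perm (Fin n)) := by
      rw [← Finset.card_univ]
      exact Finset.card_filter_le _ _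
    exact_mod_cast this
  · have hnu' : (0:ℝ) < (n : ℝ) * u ^ 2 :=
      lt_of_le_of_ne (by positivity) (Ne.symm hnu)
    set lam : ℝ := 4 * t / ((n : ℝ) * u ^ 2) with hlam
    have hlam_pos : 0 < lam := by positivity
    have key := mgf_bound u lam n f hf
    rw [← hN, ← hM] at key
    have hmark : (s.card : ℝ) * Real.exp (lam * t)
        ≤ ∑ π : Equiv.Perm (Fin n), Real.exp (lam * (M - f π)) := by
      have hterm : ∀ π ∈ s, Real.exp (lam * t) ≤ Real.exp (lam * (M - f π)) := by
        intro π hπ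
        rw [hs, Finset.mem_filter] at hπ
        apply Real.exp_le_exp.2
        have : t ≤ M - f π := by linarith [hπ.2]
        nlinarith
      calc (s.card : ℝ) * Real.exp (lam * t)
          = ∑ _π ∈ s, Real.exp (lam * t) := by
            rw [Finset.sum_const, nsmul_eq_mul]
        _ ≤ ∑ π ∈ s, Real.exp (lam * (M - f π)) := Finset.sum_le_sum hterm
        _ ≤ ∑ π : Equiv.Perm (Fin n), Real.exp (lam * (M - f π)) :=
            Finset.sum_le_sum_of_subset_of_nonneg (Finset.filter_subset _ _)
              (fun π _ _ => (Real.exp_pos _).le)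
    have hexp_eq : lam ^ 2 * n * u ^ 2 / 8 - lam * t = -2 * t ^ 2 / ((n : ℝ) * u ^ 2) := by
      rw [hlam]
      field_simp
      ring
    have hchain : (s.card : ℝ) * Real.exp (lam * t) ≤ N * Real.exp (lam ^ 2 * n * u ^ 2 / 8) :=
      le_trans hmark key
    rw [div_le_iff₀ hNpos]
    calc (s.card : ℝ)
        = (s.card : ℝ) * Real.exp (lam * t) / Real.exp (lam * t) := by
          field_simp
      _ ≤ N * Real.exp (lam ^ 2 * n * u ^ 2 / 8) / Real.exp (lam * t) := by
          gcongr
      _ = N * Real.exp (lam ^ 2 * n * u ^ 2 / 8 - lam * t) := by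
          rw [Real.exp_sub]
          ring
      _ = Real.exp (-2 * t ^ 2 / (n * u ^ 2)) * N := by
          rw [hexp_eq]
          ring
end

section
/- Let G be a bipartite graph with parts A and B of size N, with minimum degree at least d₀N, and suppose that every two distinct vertices of A have at most d₂²N common neighbours in B. Let K ⊆ A with |K| = k ≥ 1 and L ⊆ B with |L| = ℓ, where 1 ≤ ℓ < N, let m = e_G(K, B∖L) denote the number of edges between K and B∖L, and assume m ≤ d₀kN. Then m·(m/(N−ℓ) − 1) + (d₀kN − m)·((d₀kN − m)/ℓ − 1) ≤ k(k−1)·d₂²·N. -/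
open Finset

private lemma stmt18_aux1 {m A Nl : ℝ} (hNl : 0 < Nl) (hCS : m ^ 2 ≤ Nl * A) :
    m * (m / Nl - 1) ≤ A - m := by
  have h' : m * m / Nl ≤ A := by
    rw [div_le_iff₀ hNl]
    nlinarith
  calc m * (m / Nl - 1) = m * m / Nl - m := by ring
    _ ≤ A - m := by linarith

private lemma stmt18_aux2 {x S2 B l : ℝ} (hl : 0 < l) (hx0 : 0 ≤ x) (hxS : x ≤ S2)
    (hBS : S2 ≤ B) (hCS : S2 ^ 2 ≤ l * B) : x * (x / l - 1) ≤ B - S2 := by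
  have key : x ^ 2 - l * x ≤ l * B - l * S2 := by
    rcases le_or_gt x l with h | h
    · nlinarith [mul_nonneg hx0 (sub_nonneg.mpr h), mul_nonneg hl.le (sub_nonneg.mpr hBS)]
    · nlinarith [mul_nonneg (sub_nonneg.mpr hxS) (by linarith : (0:ℝ) ≤ S2 + x - l)]
  have h' : x * x ≤ (B - S2 + x) * l := by nlinarith
  have h'' : x * x / l ≤ B - S2 + x := (div_le_iff₀ hl).mpr h'
  calc x * (x / l - 1) = x * x / l - x := by ring
    _ ≤ B - S2 := by linarith

open scoped Classical in
/-- the double-counting inequality for bipartite graphs with parts of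
size `N`, minimum degree at least `d₀N` and codegrees (of two distinct vertices of `A`)
at most `d₂²N`: for `K ⊆ A` with `|K| = k ≥ 1`, `L ⊆ B` with `|L| = ℓ`, `1 ≤ ℓ < N`, and
`m = e(K, B∖L) ≤ d₀kN`, one has
`m(m/(N-ℓ) - 1) + (d₀kN - m)((d₀kN - m)/ℓ - 1) ≤ k(k-1)d₂²N`. -/
theorem stmt_18 (N : ℕ) (E : Finset (Fin N × Fin N)) (d₀ d₂ : ℝ)
    (hdegA : ∀ a : Fin N, d₀ * N ≤ ((E.filter fun e => e.1 = a).card : ℝ))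
    (hdegB : ∀ b : Fin N, d₀ * N ≤ ((E.filter fun e => e.2 = b).card : ℝ))
    (hcodeg : ∀ a₁ a₂ : Fin N, a₁ ≠ a₂ →
      ((Finset.univ.filter fun b => (a₁, b) ∈ E ∧ (a₂, b) ∈ E).card : ℝ) ≤ d₂ ^ 2 * N)
    (K L : Finset (Fin N)) (k ℓ : ℕ) (hK : K.card = k) (hL : L.card = ℓ)
    (hk1 : 1 ≤ k) (hl1 : 1 ≤ ℓ) (hlN : ℓ < N)
    (m : ℝ) (hm : m = ((E.filter fun e => e.1 ∈ K ∧ e.2 ∉ L).card : ℝ))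
    (hmle : m ≤ d₀ * k * N) :
    m * (m / ((N : ℝ) - (ℓ : ℝ)) - 1) +
        (d₀ * k * N - m) * ((d₀ * k * N - m) / (ℓ : ℝ) - 1)
      ≤ (k : ℝ) * ((k : ℝ) - 1) * d₂ ^ 2 * N := by
  classical
  set d : Fin N → ℕ := fun b => (E.filter fun e => e.1 ∈ K ∧ e.2 = b).card with hd
  -- d b = number of a ∈ K adjacent to b
  have h4 : ∀ b, d b = (K.filter fun a => (a, b) ∈ E).card := by
    intro b
    refine Finset.card_nbij' (fun e => e.1) (fun a => (a, b)) ?_ ?_ ?_ ?_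
    · rintro ⟨a, b'⟩ he
      simp only [mem_coe, mem_filter] at he ⊢
      obtain ⟨hE, hK', hb⟩ := he
      subst hb
      exact ⟨hK', hE⟩
    · intro a ha
      simp only [mem_coe, mem_filter] at ha ⊢
      refine ⟨ha.2, ha.1, ?_⟩
      trivial
    · rintro ⟨a, b'⟩ he
      simp only [mem_coe, mem_filter] at he
      simp [he.2.2]
    · intro a ha
      rfl
  -- fiberwise decomposition of edge counts over the second coordinate
  have hgen : ∀ t : Finset (Fin N),
      ∑ b ∈ t, d b = (E.filter fun e => e.1 ∈ K ∧ e.2 ∈ t).card := by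
    intro t
    rw [Finset.card_eq_sum_card_fiberwise (f := Prod.snd) (t := t)
      (fun e he => (mem_filter.mp he).2.2)]
    refine Finset.sum_congr rfl fun b hb => ?_
    simp only [hd]
    congr 1
    rw [Finset.filter_filter]
    refine Finset.filter_congr fun e he => ?_
    constructor
    · rintro ⟨h1, h3⟩; exact ⟨⟨h1, h3 ▸ hb⟩, h3⟩
    · rintro ⟨⟨h1, h2⟩, h3⟩; exact ⟨h1, h3⟩
  -- m as a sum
  have hm2 : m = ∑ b ∈ univ \ L, ((d b : ℝ)) := by
    rw [hm, ← Nat.cast_sum, hgen (univ \ L)]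
    congr 2
    refine Finset.filter_congr fun e he => ?_
    simp [mem_sdiff]
  -- total over univ
  have h2 : ∑ b, d b = (E.filter fun e => e.1 ∈ K).card := by
    rw [hgen univ]
    congr 1
    refine Finset.filter_congr fun e he => ?_
    simp
  -- total as sum of degrees over K
  have h3 : (E.filter fun e => e.1 ∈ K).card
      = ∑ a ∈ K, (E.filter fun e => e.1 = a).card := by
    rw [Finset.card_eq_sum_card_fiberwise (s := E.filter fun e => e.1 ∈ K) (f := Prod.fst) (t := K)
      (fun e he => (mem_filter.mp he).2)]
    refine Finset.sum_congr rfl fun a ha => ?_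
    congr 1
    rw [Finset.filter_filter]
    refine Finset.filter_congr fun e he => ?_
    constructor
    · rintro ⟨h1, h2⟩; exact h2
    · intro h1; exact ⟨h1 ▸ ha, h1⟩
  -- sum of squares via codegrees
  have h5 : ∑ b, (d b)^2 = ∑ a₁ ∈ K, ∑ a₂ ∈ K,
      (univ.filter fun b => (a₁, b) ∈ E ∧ (a₂, b) ∈ E).card := by
    have key : ∀ b, (d b)^2 = ∑ a₁ ∈ K, ∑ a₂ ∈ K,
        if (a₁, b) ∈ E ∧ (a₂, b) ∈ E then 1 else 0 := by
      intro b
      rw [h4 b, sq, Finset.card_filter, Finset.sum_mul_sum]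
      refine Finset.sum_congr rfl fun a₁ _ => Finset.sum_congr rfl fun a₂ _ => ?_
      by_cases h1 : (a₁, b) ∈ E <;> by_cases h2 : (a₂, b) ∈ E <;> simp [h1, h2]
    calc ∑ b, (d b)^2
        = ∑ b, ∑ a₁ ∈ K, ∑ a₂ ∈ K, if (a₁, b) ∈ E ∧ (a₂, b) ∈ E then 1 else 0 :=
          Finset.sum_congr rfl fun b _ => key b
      _ = ∑ a₁ ∈ K, ∑ a₂ ∈ K, ∑ b, if (a₁, b) ∈ E ∧ (a₂, b) ∈ E then 1 else 0 := by
          rw [Finset.sum_comm]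
          exact Finset.sum_congr rfl fun a₁ _ => Finset.sum_comm
      _ = ∑ a₁ ∈ K, ∑ a₂ ∈ K,
            (univ.filter fun b => (a₁, b) ∈ E ∧ (a₂, b) ∈ E).card := by
          refine Finset.sum_congr rfl fun a₁ _ => Finset.sum_congr rfl fun a₂ _ => ?_
          rw [Finset.card_filter]
  -- diagonal codegree = degree
  have h6 : ∀ a : Fin N, ((univ.filter fun b => (a, b) ∈ E ∧ (a, b) ∈ E).card : ℕ)
      = (E.filter fun e => e.1 = a).card := by
    intro a
    refine Finset.card_nbij' (fun b => (a, b)) (fun e => e.2) ?_ ?_ ?_ ?_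
    · intro b hb
      simp only [mem_coe, mem_filter] at hb ⊢
      refine ⟨hb.2.1, ?_⟩
      trivial
    · rintro ⟨a', b⟩ he
      simp only [mem_coe, mem_filter] at he ⊢
      obtain ⟨hE, ha⟩ := he
      subst ha
      exact ⟨mem_univ _, hE, hE⟩
    · intro b hb; rfl
    · rintro ⟨a', b⟩ he
      simp only [mem_coe, mem_filter] at he
      simp [he.2]
  -- now pass to reals
  set T : ℝ := ∑ b, (d b : ℝ) with hT
  set S2 : ℝ := ∑ b ∈ L, (d b : ℝ) with hS2
  set A : ℝ := ∑ b ∈ univ \ L, (d b : ℝ)^2 with hA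
  set B : ℝ := ∑ b ∈ L, (d b : ℝ)^2 with hB
  have hsplit : T = m + S2 := by
    rw [hT, hm2, hS2, Finset.sum_sdiff (subset_univ L)]
  have hABsum : A + B = ∑ b, (d b : ℝ)^2 := by
    rw [hA, hB, Finset.sum_sdiff (subset_univ L)]
  have hTge : d₀ * k * N ≤ T := by
    have : T = ∑ a ∈ K, ((E.filter fun e => e.1 = a).card : ℝ) := by
      rw [hT, ← Nat.cast_sum, h2, h3, Nat.cast_sum]
    rw [this]
    calc d₀ * k * N = ∑ _a ∈ K, d₀ * N := by
          rw [Finset.sum_const, hK, nsmul_eq_mul]; ring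
      _ ≤ _ := Finset.sum_le_sum fun a _ => hdegA a
  have hcard_sdiff : ((univ \ L).card : ℝ) = (N : ℝ) - ℓ := by
    rw [Finset.card_sdiff_of_subset (subset_univ L), hL, Finset.card_univ, Fintype.card_fin,
      Nat.cast_sub hlN.le]
  have hCS1 : m ^ 2 ≤ ((N : ℝ) - ℓ) * A := by
    rw [hm2, hA, ← hcard_sdiff]
    exact sq_sum_le_card_mul_sum_sq
  have hCS2 : S2 ^ 2 ≤ (ℓ : ℝ) * B := by
    rw [hS2, hB, ← hL]
    exact sq_sum_le_card_mul_sum_sq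
  have hBS : S2 ≤ B := by
    refine Finset.sum_le_sum fun b _ => ?_
    have := Nat.le_self_pow (two_ne_zero) (d b)
    exact_mod_cast this
  have hsumsq : ∑ b, (d b : ℝ)^2 ≤ T + (k : ℝ) * ((k : ℝ) - 1) * d₂ ^ 2 * N := by
    have h5' : ∑ b, (d b : ℝ)^2 = ∑ a₁ ∈ K, ∑ a₂ ∈ K,
        ((univ.filter fun b => (a₁, b) ∈ E ∧ (a₂, b) ∈ E).card : ℝ) := by
      have := congrArg (fun n : ℕ => (n : ℝ)) h5
      push_cast at this
      exact this
    have hTeq : T = ∑ a ∈ K, ((E.filter fun e => e.1 = a).card : ℝ) := by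
      rw [hT, ← Nat.cast_sum, h2, h3, Nat.cast_sum]
    rw [h5', hTeq]
    have hstep : ∀ a₁ ∈ K, ∑ a₂ ∈ K,
        ((univ.filter fun b => (a₁, b) ∈ E ∧ (a₂, b) ∈ E).card : ℝ)
        ≤ ((E.filter fun e => e.1 = a₁).card : ℝ) + ((k : ℝ) - 1) * (d₂ ^ 2 * N) := by
      intro a₁ ha₁
      rw [← Finset.add_sum_erase K _ ha₁, h6 a₁]
      gcongr
      calc ∑ a₂ ∈ K.erase a₁,
            ((univ.filter fun b => (a₁, b) ∈ E ∧ (a₂, b) ∈ E).card : ℝ)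
          ≤ (K.erase a₁).card • (d₂ ^ 2 * N) :=
            Finset.sum_le_card_nsmul _ _ _ fun a₂ ha₂ =>
              hcodeg a₁ a₂ (Ne.symm (Finset.ne_of_mem_erase ha₂))
        _ = ((k : ℝ) - 1) * (d₂ ^ 2 * N) := by
            rw [nsmul_eq_mul, Finset.card_erase_of_mem ha₁, hK,
              Nat.cast_sub hk1, Nat.cast_one]
    calc ∑ a₁ ∈ K, ∑ a₂ ∈ K,
          ((univ.filter fun b => (a₁, b) ∈ E ∧ (a₂, b) ∈ E).card : ℝ)
        ≤ ∑ a₁ ∈ K, (((E.filter fun e => e.1 = a₁).card : ℝ)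
            + ((k : ℝ) - 1) * (d₂ ^ 2 * N)) := Finset.sum_le_sum hstep
      _ = (∑ a ∈ K, ((E.filter fun e => e.1 = a).card : ℝ))
            + (k : ℝ) * ((k : ℝ) - 1) * d₂ ^ 2 * N := by
          rw [Finset.sum_add_distrib, Finset.sum_const, hK, nsmul_eq_mul]; ring
  -- final arithmetic
  have hm0 : 0 ≤ m := by rw [hm]; positivity
  have hNl : (0 : ℝ) < (N : ℝ) - ℓ := by
    have : (ℓ : ℝ) < N := by exact_mod_cast hlN
    linarith
  have hl0 : (0 : ℝ) < (ℓ : ℝ) := by exact_mod_cast hl1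
  have hl1' : (1 : ℝ) ≤ (ℓ : ℝ) := by exact_mod_cast hl1
  have hS2ge : d₀ * k * N - m ≤ S2 := by linarith
  have hx0 : 0 ≤ d₀ * k * N - m := by linarith
  set x : ℝ := d₀ * k * N - m with hx
  -- step 1
  have step1 : m * (m / ((N : ℝ) - ℓ) - 1) ≤ A - m := stmt18_aux1 hNl hCS1
  have step2 : x * (x / (ℓ : ℝ) - 1) ≤ B - S2 :=
    stmt18_aux2 hl0 hx0 hS2ge hBS hCS2
  have final := hsumsq
  rw [← hABsum] at final
  have : m * (m / ((N : ℝ) - ℓ) - 1) + x * (x / (ℓ : ℝ) - 1)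
      ≤ (A - m) + (B - S2) := add_le_add step1 step2
  linarith [this, hsplit, final]
end
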